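/- arXiv:1705.06484 — 2 statements merged into one kernel-verified Lean document; each statement's English description precedes it below -/
import Mathlib

section
/- For each n ∈ ℕ, let S_1, …, S_n be finite state spaces, P_1^{(n)}, …, P_{n−1}^{(n)} stochastic matrices satisfying: there exist 0 ≤ δ < 1 and s ∈ ℕ with τ(P_k^{(n)}·⋯·P_{k+s}^{(n)}) < δ for all n and all 1 ≤ k ≤ n − s − 1, and let ξ_i^{(n)} : S_i → ℝ be uniformly bounded functions (sup over all n, i, t of |ξ_i^{(n)}(t)| finite). For initial distributions π_n and π̃_n on S_1, let X_i^{(n)} and X̃_i^{(n)} denote the corresponding Markov chains (laws given by π_n(s_1)·∏(P_i^{(n)})_{s_i,s_{i+1}} and π̃_n(s_1)·∏(P_i^{(n)})_{s_i,s_{i+1}} respectively), and set e_n = E(Σ_{k=1}^n ξ_k^{(n)}(X_k^{(n)})), σ_n² = Var(Σ_{k=1}^n ξ_k^{(n)}(X_k^{(n)})), and likewise ẽ_n, σ̃_n² for the chains X̃. Then there exists a constant C, independent of the sequences (π_n) and (π̃_n), such that |e_n − ẽ_n| ≤ C and |σ_n² − σ̃_n²| ≤ C for all n ∈ ℕ.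 -/
open MeasureTheory
open scoped BigOperators Classical

/-- A stochastic matrix: nonnegative entries, each row sums to 1. -/
def IsStochastic {T S : Type} [Fintype S] (P : T → S → ℝ) : Prop :=
  (∀ t s, 0 ≤ P t s) ∧ ∀ t, ∑ s : S, P t s = 1

/-- The contraction (Dobrushin) coefficient of a matrix:
`τ(P) = (1/2)·max_{t₁,t₂} Σ_s |P t₁ s − P t₂ s|`. -/
noncomputable def contractionCoeff {T S : Type} [Fintype T] [Fintype S]
    (P : T → S → ℝ) : ℝ :=
  (1 / 2) * ⨆ t₁ : T, ⨆ t₂ : T, ∑ s : S, |P t₁ s - P t₂ s|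

/-- `matProd P j k` is the product `P_j · P_{j+1} · ⋯ · P_{j+k−1}` of `k` consecutive
transition matrices (the identity matrix if `k = 0`). -/
noncomputable def matProd {S : ℕ → Type} [∀ i, Fintype (S i)]
    (P : (i : ℕ) → S i → S (i + 1) → ℝ) (j : ℕ) : (k : ℕ) → S j → S (j + k) → ℝ
  | 0 => fun t s => if t = s then 1 else 0
  | k + 1 => fun t u => ∑ s : S (j + k), matProd P j k t s * P (j + k) s u

set_option linter.unusedSectionVars false

section Generic
variable {T U : Type} [Fintype T] [Fintype U]

lemma row_diff_le_two {R : T → U → ℝ} (hR : IsStochastic R) (t₁ t₂ : T) :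
    ∑ u : U, |R t₁ u - R t₂ u| ≤ 2 := by
  have h : ∀ u : U, |R t₁ u - R t₂ u| ≤ R t₁ u + R t₂ u := by
    intro u
    rw [abs_sub_le_iff]
    constructor <;> nlinarith [hR.1 t₁ u, hR.1 t₂ u]
  calc ∑ u : U, |R t₁ u - R t₂ u| ≤ ∑ u : U, (R t₁ u + R t₂ u) := Finset.sum_le_sum (fun u _ => h u)
    _ = 2 := by rw [Finset.sum_add_distrib, hR.2 t₁, hR.2 t₂]; norm_num

lemma row_diff_le_tau {R : T → U → ℝ} (hR : IsStochastic R) (t₁ t₂ : T) :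
    ∑ u : U, |R t₁ u - R t₂ u| ≤ 2 * contractionCoeff R := by
  have hb : ∀ t₁' : T, BddAbove (Set.range fun t₂' => ∑ u : U, |R t₁' u - R t₂' u|) := by
    intro t₁'
    exact ⟨2, by rintro x ⟨t₂', rfl⟩; exact row_diff_le_two hR t₁' t₂'⟩
  have : Nonempty T := ⟨t₁⟩
  have hb2 : BddAbove (Set.range fun t₁' => ⨆ t₂' : T, ∑ u : U, |R t₁' u - R t₂' u|) := by
    refine ⟨2, ?_⟩
    rintro x ⟨t₁', rfl⟩
    exact ciSup_le fun t₂' => row_diff_le_two hR t₁' t₂'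
  have h1 : ∑ u : U, |R t₁ u - R t₂ u| ≤ ⨆ t₂' : T, ∑ u : U, |R t₁ u - R t₂' u| :=
    le_ciSup (hb t₁) t₂
  have h2 : (⨆ t₂' : T, ∑ u : U, |R t₁ u - R t₂' u|) ≤
      ⨆ t₁' : T, ⨆ t₂' : T, ∑ u : U, |R t₁' u - R t₂' u| := le_ciSup hb2 t₁
  rw [contractionCoeff]
  linarith [h1.trans h2]

lemma sum_push (R : T → U → ℝ) (hR : IsStochastic R) (ν : T → ℝ) :
    ∑ u : U, (∑ t : T, ν t * R t u) = ∑ t : T, ν t := by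
  rw [Finset.sum_comm]
  exact Finset.sum_congr rfl fun t _ => by rw [← Finset.mul_sum, hR.2 t, mul_one]

lemma l1_nonexpand (R : T → U → ℝ) (hR : IsStochastic R) (ν : T → ℝ) :
    ∑ u : U, |∑ t : T, ν t * R t u| ≤ ∑ t : T, |ν t| := by
  calc ∑ u : U, |∑ t : T, ν t * R t u| ≤ ∑ u : U, ∑ t : T, |ν t| * R t u := by
        refine Finset.sum_le_sum fun u _ => ?_
        refine (Finset.abs_sum_le_sum_abs _ _).trans ?_
        refine Finset.sum_le_sum fun t _ => ?_
        rw [abs_mul, abs_of_nonneg (hR.1 t u)]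
    _ = ∑ t : T, |ν t| := sum_push R hR _

lemma l1_contract {T U : Type} [Fintype T] [Fintype U] (R : T → U → ℝ) (hR : IsStochastic R) (ν : T → ℝ)
    (h0 : ∑ t : T, ν t = 0) :
    ∑ u : U, |∑ t : T, ν t * R t u| ≤ contractionCoeff R * ∑ t : T, |ν t| := by
  classical
  set νp := fun t => max (ν t) 0 with hνp
  set νm := fun t => max (-ν t) 0 with hνm
  have hp0 : ∀ t, 0 ≤ νp t := fun t => le_max_right _ _
  have hm0' : ∀ t, 0 ≤ νm t := fun t => le_max_right _ _
  have hsplit : ∀ t, ν t = νp t - νm t := by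
    intro t; rcases le_total 0 (ν t) with h | h
    · have h1 : νp t = ν t := max_eq_left h
      have h2 : νm t = 0 := max_eq_right (neg_nonpos.mpr h)
      rw [h1, h2]; ring
    · have h1 : νp t = 0 := max_eq_right h
      have h2 : νm t = -ν t := max_eq_left (neg_nonneg.mpr h)
      rw [h1, h2]; ring
  have habs : ∀ t, |ν t| = νp t + νm t := by
    intro t; rcases le_total 0 (ν t) with h | h
    · have h1 : νp t = ν t := max_eq_left h
      have h2 : νm t = 0 := max_eq_right (neg_nonpos.mpr h)
      rw [h1, h2, abs_of_nonneg h]; ring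
    · have h1 : νp t = 0 := max_eq_right h
      have h2 : νm t = -ν t := max_eq_left (neg_nonneg.mpr h)
      rw [h1, h2, abs_of_nonpos h]; ring
  set m := ∑ t : T, νp t with hm
  have hmm : ∑ t : T, νm t = m := by
    have h1 : ∑ t : T, (νp t - νm t) = 0 := by
      rw [show ∑ t : T, (νp t - νm t) = ∑ t : T, ν t from
        Finset.sum_congr rfl fun t _ => (hsplit t).symm, h0]
    rw [Finset.sum_sub_distrib] at h1
    linarith
  have habs2 : ∑ t : T, |ν t| = 2 * m := by
    rw [Finset.sum_congr rfl fun t _ => habs t, Finset.sum_add_distrib, hmm]; ring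
  have hm0 : 0 ≤ m := Finset.sum_nonneg fun t _ => hp0 t
  rcases eq_or_lt_of_le hm0 with hz | hmpos
  · have hp : ∀ t, νp t = 0 := fun t =>
      (Finset.sum_eq_zero_iff_of_nonneg (fun t _ => hp0 t)).mp hz.symm t (Finset.mem_univ t)
    have hmz : ∀ t, νm t = 0 := by
      intro t
      have h' : ∑ t : T, νm t = 0 := by rw [hmm, ← hz]
      exact (Finset.sum_eq_zero_iff_of_nonneg (fun t _ => hm0' t)).mp h' t (Finset.mem_univ t)
    have hν : ∀ t, ν t = 0 := fun t => by rw [hsplit t, hp t, hmz t]; ring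
    simp [hν]
  · have key : ∀ u, m * |∑ t : T, ν t * R t u| ≤
        ∑ t₁ : T, ∑ t₂ : T, νp t₁ * νm t₂ * |R t₁ u - R t₂ u| := by
      intro u
      have e1 : ∑ t₁ : T, ∑ t₂ : T, νp t₁ * νm t₂ * (R t₁ u - R t₂ u)
          = m * (∑ t : T, ν t * R t u) := by
        have expand : ∀ t₁, ∑ t₂ : T, νp t₁ * νm t₂ * (R t₁ u - R t₂ u)
            = νp t₁ * R t₁ u * m - νp t₁ * ∑ t₂ : T, νm t₂ * R t₂ u := by
          intro t₁
          rw [show ∑ t₂ : T, νp t₁ * νm t₂ * (R t₁ u - R t₂ u)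
              = ∑ t₂ : T, (νp t₁ * R t₁ u * νm t₂ - νp t₁ * (νm t₂ * R t₂ u)) from
            Finset.sum_congr rfl fun t₂ _ => by ring,
            Finset.sum_sub_distrib, ← Finset.mul_sum, ← Finset.mul_sum, hmm]
        rw [Finset.sum_congr rfl fun t₁ _ => expand t₁, Finset.sum_sub_distrib,
          ← Finset.sum_mul, ← Finset.sum_mul]
        have h2 : ∑ t : T, ν t * R t u
            = ∑ t : T, νp t * R t u - ∑ t : T, νm t * R t u := by
          rw [← Finset.sum_sub_distrib]
          exact Finset.sum_congr rfl fun t _ => by rw [hsplit t]; ring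
        rw [h2]; ring
      calc m * |∑ t : T, ν t * R t u|
          = |∑ t₁ : T, ∑ t₂ : T, νp t₁ * νm t₂ * (R t₁ u - R t₂ u)| := by
            rw [e1, abs_mul, abs_of_pos hmpos]
        _ ≤ ∑ t₁ : T, ∑ t₂ : T, |νp t₁ * νm t₂ * (R t₁ u - R t₂ u)| := by
            refine (Finset.abs_sum_le_sum_abs _ _).trans ?_
            exact Finset.sum_le_sum fun t₁ _ => Finset.abs_sum_le_sum_abs _ _
        _ = ∑ t₁ : T, ∑ t₂ : T, νp t₁ * νm t₂ * |R t₁ u - R t₂ u| := by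
            refine Finset.sum_congr rfl fun t₁ _ => Finset.sum_congr rfl fun t₂ _ => ?_
            rw [abs_mul, abs_mul, abs_of_nonneg (hp0 t₁), abs_of_nonneg (hm0' t₂)]
    have key2 : m * ∑ u : U, |∑ t : T, ν t * R t u| ≤ m * (contractionCoeff R * (2 * m)) := by
      calc m * ∑ u : U, |∑ t : T, ν t * R t u|
          = ∑ u : U, m * |∑ t : T, ν t * R t u| := by rw [Finset.mul_sum]
        _ ≤ ∑ u : U, ∑ t₁ : T, ∑ t₂ : T, νp t₁ * νm t₂ * |R t₁ u - R t₂ u| :=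
            Finset.sum_le_sum fun u _ => key u
        _ = ∑ t₁ : T, ∑ t₂ : T, νp t₁ * νm t₂ * ∑ u : U, |R t₁ u - R t₂ u| := by
            rw [Finset.sum_comm]
            refine Finset.sum_congr rfl fun t₁ _ => ?_
            rw [Finset.sum_comm]
            exact Finset.sum_congr rfl fun t₂ _ => by rw [Finset.mul_sum]
        _ ≤ ∑ t₁ : T, ∑ t₂ : T, νp t₁ * νm t₂ * (2 * contractionCoeff R) := by
            refine Finset.sum_le_sum fun t₁ _ => Finset.sum_le_sum fun t₂ _ => ?_
            exact mul_le_mul_of_nonneg_left (row_diff_le_tau hR t₁ t₂)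
              (mul_nonneg (hp0 t₁) (hm0' t₂))
        _ = m * (contractionCoeff R * (2 * m)) := by
            have h3 : ∀ t₁ : T, ∑ t₂ : T, νp t₁ * νm t₂ * (2 * contractionCoeff R)
                = νp t₁ * (m * (2 * contractionCoeff R)) := by
              intro t₁
              rw [show (∑ t₂ : T, νp t₁ * νm t₂ * (2 * contractionCoeff R))
                  = ∑ t₂ : T, νp t₁ * (2 * contractionCoeff R) * νm t₂ from
                Finset.sum_congr rfl fun _ _ => by ring, ← Finset.mul_sum, hmm]
              ring
            rw [Finset.sum_congr rfl fun t₁ _ => h3 t₁, ← Finset.sum_mul]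
            ring
    have hfin := (mul_le_mul_iff_right₀ hmpos).mp key2
    rw [habs2]
    linarith
section Chain
variable {S : ℕ → Type} [∀ i, Fintype (S i)] [∀ i, Nonempty (S i)]

lemma matProd_stochastic (A : (i : ℕ) → S i → S (i + 1) → ℝ)
    (hA : ∀ i, IsStochastic (A i)) (j : ℕ) : ∀ m, IsStochastic (matProd A j m) := by
  intro m
  induction m with
  | zero =>
    constructor
    · intro t u; dsimp [matProd]; split <;> norm_num
    · intro t; simp [matProd]
  | succ m ih =>
    constructor
    · intro t u
      exact Finset.sum_nonneg fun a _ => mul_nonneg (ih.1 t a) ((hA (j + m)).1 a u)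
    · intro t
      show ∑ u : S (j + (m+1)), ∑ a : S (j + m), matProd A j m t a * A (j + m) a u = 1
      rw [Finset.sum_comm]
      calc ∑ a : S (j + m), ∑ u : S (j + m + 1), matProd A j m t a * A (j + m) a u
          = ∑ a : S (j + m), matProd A j m t a := by
            refine Finset.sum_congr rfl fun a _ => ?_
            rw [← Finset.mul_sum, (hA (j + m)).2 a, mul_one]
        _ = 1 := ih.2 t

/-- Pushing a vector forward `m` steps starting at time `j`. -/
noncomputable def pushf (A : (i : ℕ) → S i → S (i + 1) → ℝ) (j : ℕ) (α : S j → ℝ) :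
    (m : ℕ) → S (j + m) → ℝ
  | 0 => α
  | m + 1 => fun b => ∑ a : S (j + m), pushf A j α m a * A (j + m) a b

lemma pushf_eq_matProd (A : (i : ℕ) → S i → S (i + 1) → ℝ) (j : ℕ) (α : S j → ℝ) :
    ∀ m, ∀ b : S (j + m), pushf A j α m b = ∑ a : S j, α a * matProd A j m a b := by
  intro m
  induction m with
  | zero =>
    intro b
    simp [pushf, matProd, mul_ite, mul_one, mul_zero]
  | succ m ih =>
    intro b
    show ∑ a : S (j + m), pushf A j α m a * A (j + m) a b = _
    rw [Finset.sum_congr rfl fun a _ => by rw [ih a]]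
    show ∑ a : S (j + m), (∑ t : S j, α t * matProd A j m t a) * A (j + m) a b
        = ∑ t : S j, α t * matProd A j (m + 1) t b
    rw [show (∑ a : S (j + m), (∑ t : S j, α t * matProd A j m t a) * A (j + m) a b)
        = ∑ a : S (j + m), ∑ t : S j, (α t * matProd A j m t a) * A (j + m) a b from
      Finset.sum_congr rfl fun a _ => Finset.sum_mul .., Finset.sum_comm]
    refine Finset.sum_congr rfl fun t _ => ?_
    show ∑ a : S (j + m), (α t * matProd A j m t a) * A (j + m) a b
        = α t * ∑ a : S (j + m), matProd A j m t a * A (j + m) a b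
    rw [Finset.mul_sum]
    exact Finset.sum_congr rfl fun a _ => by ring

/-- recasting a vector along an equality of indices -/
def recast {k l : ℕ} (h : k = l) (f : S k → ℝ) : S l → ℝ :=
  fun b => f (cast (congrArg S h.symm) b)

lemma recast_sum_abs {k l : ℕ} (h : k = l) (f : S k → ℝ) :
    ∑ b : S l, |recast (S := S) h f b| = ∑ a : S k, |f a| := by
  subst h; rfl

lemma recast_push (A : (i : ℕ) → S i → S (i + 1) → ℝ) {k l : ℕ} (h : k = l) (X : S k → ℝ) :
    (fun b => ∑ a : S l, recast (S := S) h X a * A l a b)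
      = recast (S := S) (congrArg (· + 1) h) (fun b => ∑ a : S k, X a * A k a b) := by
  subst h; rfl

lemma pushf_comp (A : (i : ℕ) → S i → S (i + 1) → ℝ) (j : ℕ) (α : S j → ℝ) (m₁ : ℕ) :
    ∀ m₂, pushf A j α (m₁ + m₂)
      = recast (S := S) (by omega) (pushf A (j + m₁) (pushf A j α m₁) m₂) := by
  intro m₂
  induction m₂ with
  | zero => rfl
  | succ m₂ ih =>
    show (fun b => ∑ a : S (j + (m₁ + m₂)), pushf A j α (m₁ + m₂) a * A (j + (m₁ + m₂)) a b) = _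
    rw [ih]
    rw [recast_push]
    rfl
end Chain
section Chain2
variable {S : ℕ → Type} [∀ i, Fintype (S i)] [∀ i, Nonempty (S i)]

lemma pushf_sum (A : (i : ℕ) → S i → S (i + 1) → ℝ) (hA : ∀ i, IsStochastic (A i))
    (j : ℕ) (β : S j → ℝ) : ∀ m, ∑ u : S (j + m), pushf A j β m u = ∑ t : S j, β t := by
  intro m
  induction m with
  | zero => rfl
  | succ m ih =>
    show ∑ u : S (j + m + 1), ∑ a : S (j + m), pushf A j β m a * A (j + m) a u = _
    rw [sum_push (A (j + m)) (hA (j + m)), ih]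

lemma pushf_abs_nonexpand (A : (i : ℕ) → S i → S (i + 1) → ℝ) (hA : ∀ i, IsStochastic (A i))
    (j : ℕ) (β : S j → ℝ) : ∀ m, ∑ u : S (j + m), |pushf A j β m u| ≤ ∑ t : S j, |β t| := by
  intro m
  induction m with
  | zero => exact le_refl _
  | succ m ih =>
    show ∑ u : S (j + m + 1), |∑ a : S (j + m), pushf A j β m a * A (j + m) a u| ≤ _
    exact (l1_nonexpand (A (j + m)) (hA (j + m)) _).trans ih

lemma decay (A : (i : ℕ) → S i → S (i + 1) → ℝ) (hA : ∀ i, IsStochastic (A i))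
    (δ : ℝ) (hδ0 : 0 ≤ δ) (s n : ℕ)
    (hcontr : ∀ k, 1 ≤ k → k + s + 1 ≤ n → contractionCoeff (matProd A k (s + 1)) < δ) :
    ∀ q j m (β : S j → ℝ) (c : ℝ), 1 ≤ j → j + m ≤ n → (s + 1) * q ≤ m →
      (∑ t : S j, β t = 0) → (∑ t : S j, |β t| ≤ c) →
      ∑ u : S (j + m), |pushf A j β m u| ≤ c * δ ^ q := by
  intro q
  induction q with
  | zero =>
    intro j m β c hj hn _ _ hc
    rw [pow_zero, mul_one]
    exact (pushf_abs_nonexpand A hA j β m).trans hc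
  | succ q ih =>
    intro j m β c hj hn hq h0 hc
    have hs1m : s + 1 ≤ m := by
      calc s + 1 = (s + 1) * 1 := by ring
        _ ≤ (s + 1) * (q + 1) := Nat.mul_le_mul_left _ (by omega)
        _ ≤ m := hq
    obtain ⟨m', rfl⟩ := Nat.exists_eq_add_of_le hs1m
    rw [pushf_comp A j β (s + 1) m', recast_sum_abs]
    have hβ'0 : ∑ t : S (j + (s + 1)), pushf A j β (s + 1) t = 0 := by
      rw [pushf_sum A hA j β (s + 1), h0]
    have hβ'c : ∑ t : S (j + (s + 1)), |pushf A j β (s + 1) t| ≤ c * δ := by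
      have h1 : ∑ t : S (j + (s + 1)), |pushf A j β (s + 1) t|
          = ∑ u : S (j + (s + 1)), |∑ t : S j, β t * matProd A j (s + 1) t u| :=
        Finset.sum_congr rfl fun u _ => by rw [pushf_eq_matProd A j β (s + 1) u]
      rw [h1]
      have h2 := l1_contract (matProd A j (s + 1)) (matProd_stochastic A hA j (s + 1)) β h0
      have h3 : contractionCoeff (matProd A j (s + 1)) < δ := hcontr j hj (by omega)
      have h4 : 0 ≤ ∑ t : S j, |β t| := Finset.sum_nonneg fun t _ => abs_nonneg _
      calc ∑ u : S (j + (s + 1)), |∑ t : S j, β t * matProd A j (s + 1) t u|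
          ≤ contractionCoeff (matProd A j (s + 1)) * ∑ t : S j, |β t| := h2
        _ ≤ δ * c := mul_le_mul h3.le hc h4 hδ0
        _ = c * δ := mul_comm _ _
    have hms : (s + 1) * (q + 1) = (s + 1) * q + (s + 1) := Nat.mul_succ _ _
    calc ∑ u : S (j + (s + 1) + m'), |pushf A (j + (s + 1)) (pushf A j β (s + 1)) m' u|
        ≤ (c * δ) * δ ^ q :=
          ih (j + (s + 1)) m' (pushf A j β (s + 1)) (c * δ) (by omega) (by omega) (by omega)
            hβ'0 hβ'c
      _ = c * δ ^ (q + 1) := by ring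
end Chain2
section Paths
variable {S : ℕ → Type} [∀ i, Fintype (S i)] [∀ i, Nonempty (S i)]

/-- marginal distribution at absolute time `k` (junk at `k = 0`). -/
noncomputable def mTo (A : (i : ℕ) → S i → S (i + 1) → ℝ) (π : S 1 → ℝ) :
    (k : ℕ) → S k → ℝ
  | 0 => fun _ => 0
  | 1 => π
  | (k + 2) => fun b => ∑ a : S (k + 1), mTo A π (k + 1) a * A (k + 1) a b

lemma mTo_succ (A : (i : ℕ) → S i → S (i + 1) → ℝ) (π : S 1 → ℝ) (m : ℕ) (hm : 1 ≤ m) :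
    mTo A π (m + 1) = fun b => ∑ a : S m, mTo A π m a * A m a b := by
  match m, hm with
  | (k + 1), _ => rfl

lemma mTo_comp (A : (i : ℕ) → S i → S (i + 1) → ℝ) (π : S 1 → ℝ) (j : ℕ) (hj : 1 ≤ j) :
    ∀ d (b : S (j + d)), mTo A π (j + d) b = ∑ a : S j, mTo A π j a * matProd A j d a b := by
  intro d
  induction d with
  | zero =>
    intro b
    show mTo A π j b = ∑ a : S j, mTo A π j a * if a = b then 1 else 0
    simp [mul_ite, mul_one, mul_zero]
  | succ d ih =>
    intro b
    show mTo A π ((j + d) + 1) b = _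
    rw [mTo_succ A π (j + d) (by omega)]
    beta_reduce
    rw [show (∑ a : S (j + d), mTo A π (j + d) a * A (j + d) a b)
        = ∑ a : S (j + d), (∑ t : S j, mTo A π j t * matProd A j d t a) * A (j + d) a b from
      Finset.sum_congr rfl fun a _ => by rw [ih a]]
    rw [show (∑ a : S (j + d), (∑ t : S j, mTo A π j t * matProd A j d t a) * A (j + d) a b)
        = ∑ a : S (j + d), ∑ t : S j, (mTo A π j t * matProd A j d t a) * A (j + d) a b from
      Finset.sum_congr rfl fun a _ => Finset.sum_mul .., Finset.sum_comm]
    refine Finset.sum_congr rfl fun t _ => ?_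
    show ∑ a : S (j + d), (mTo A π j t * matProd A j d t a) * A (j + d) a b
        = mTo A π j t * ∑ a : S (j + d), matProd A j d t a * A (j + d) a b
    rw [Finset.mul_sum]
    exact Finset.sum_congr rfl fun a _ => by ring

lemma mTo_prob (A : (i : ℕ) → S i → S (i + 1) → ℝ) (hA : ∀ i, IsStochastic (A i))
    (π : S 1 → ℝ) (hπ0 : ∀ a, 0 ≤ π a) (hπ1 : ∑ a : S 1, π a = 1) (k : ℕ) (hk : 1 ≤ k) :
    (∀ b, 0 ≤ mTo A π k b) ∧ ∑ b : S k, mTo A π k b = 1 := by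
  obtain ⟨d, rfl⟩ := Nat.exists_eq_add_of_le hk
  constructor
  · intro b
    rw [mTo_comp A π 1 le_rfl d b]
    exact Finset.sum_nonneg fun a _ => mul_nonneg (hπ0 a)
      ((matProd_stochastic A hA 1 d).1 a b)
  · rw [Finset.sum_congr rfl fun b _ => mTo_comp A π 1 le_rfl d b]
    exact (sum_push _ (matProd_stochastic A hA 1 d) (mTo A π 1)).trans hπ1

/-- The space of paths indexed by `Icc 1 n`. -/
abbrev V (S : ℕ → Type) (n : ℕ) : Type := ∀ i : (Finset.Icc 1 n : Finset ℕ), S i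

/-- Extension of a path to a function on all of `ℕ`. -/
noncomputable def extv (S : ℕ → Type) [∀ i, Nonempty (S i)] (n : ℕ) (v : V S n) :
    ∀ i, S i := fun i =>
  if h : i ∈ Finset.Icc 1 n then v ⟨i, h⟩ else Classical.arbitrary (S i)

lemma extv_mem {n i : ℕ} (v : V S n) (h : i ∈ Finset.Icc 1 n) :
    extv S n v i = v ⟨i, h⟩ := dif_pos h

/-- The path weight. -/
noncomputable def pw (A : (i : ℕ) → S i → S (i + 1) → ℝ) (π : S 1 → ℝ) (n : ℕ)
    (v : V S n) : ℝ :=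
  π (extv S n v 1) * ∏ i ∈ Finset.Ico 1 n, A i (extv S n v i) (extv S n v (i + 1))

/-- Glueing an extra coordinate onto a path. -/
noncomputable def glue {n : ℕ} (w : V S n) (b : S (n + 1)) : V S (n + 1) := fun i =>
  if h : (i : ℕ) ∈ Finset.Icc 1 n then w ⟨i, h⟩
  else cast (congrArg S (show (n + 1 : ℕ) = i by
    have h2 := i.2; simp only [Finset.mem_Icc] at h2 h; omega)) b

lemma extv_glue_le {n i : ℕ} (w : V S n) (b : S (n + 1)) (h : i ∈ Finset.Icc 1 n) :
    extv S (n + 1) (glue w b) i = extv S n w i := by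
  have h2 : i ∈ Finset.Icc 1 (n + 1) := by
    simp only [Finset.mem_Icc] at h ⊢; omega
  rw [extv_mem _ h2, extv_mem _ h]
  exact dif_pos h

lemma extv_glue_top {n : ℕ} (w : V S n) (b : S (n + 1)) :
    extv S (n + 1) (glue w b) (n + 1) = b := by
  have h2 : n + 1 ∈ Finset.Icc 1 (n + 1) := by simp
  rw [extv_mem _ h2]
  show dite _ _ _ = b
  rw [dif_neg (by simp)]
  exact cast_eq _ b

lemma glue_bijective (n : ℕ) :
    Function.Bijective (fun p : V S n × S (n + 1) => glue p.1 p.2) := by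
  constructor
  · rintro ⟨w, b⟩ ⟨w', b'⟩ h
    simp only [Prod.mk.injEq]
    constructor
    · funext i
      have h1 : (i : ℕ) ∈ Finset.Icc 1 n := i.2
      have := congrArg (fun v => extv S (n + 1) v (i : ℕ)) h
      simp only at this
      rw [extv_glue_le w b h1, extv_glue_le w' b' h1, extv_mem w h1, extv_mem w' h1] at this
      exact this
    · have := congrArg (fun v => extv S (n + 1) v (n + 1)) h
      simp only at this
      rwa [extv_glue_top, extv_glue_top] at this
  · intro v
    refine ⟨⟨fun i => v ⟨i, by have h2 := i.2; simp only [Finset.mem_Icc] at h2 ⊢; omega⟩,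
      v ⟨n + 1, by simp⟩⟩, ?_⟩
    funext i
    rcases i with ⟨i, hi⟩
    show dite _ _ _ = _
    by_cases h : i ∈ Finset.Icc 1 n
    · rw [dif_pos h]
    · rw [dif_neg h]
      have h3 : i = n + 1 := by
        simp only [Finset.mem_Icc] at hi h; omega
      subst h3
      exact cast_eq _ _

lemma sum_glue (n : ℕ) (f : V S (n + 1) → ℝ) :
    ∑ v : V S (n + 1), f v = ∑ w : V S n, ∑ b : S (n + 1), f (glue w b) := by
  calc ∑ v : V S (n + 1), f v
      = ∑ p : V S n × S (n + 1), f (glue p.1 p.2) :=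
        (Fintype.sum_bijective _ (glue_bijective n) _ f fun p => rfl).symm
    _ = ∑ w : V S n, ∑ b : S (n + 1), f (glue w b) := Fintype.sum_prod_type _

/-- the one-point path -/
noncomputable def sing (a : S 1) : V S 1 := fun i =>
  cast (congrArg S (show (1 : ℕ) = i by
    have h2 := i.2; simp only [Finset.mem_Icc] at h2; omega)) a

lemma extv_sing (a : S 1) : extv S 1 (sing a) 1 = a := by
  rw [extv_mem _ (by simp)]
  exact cast_eq _ a

lemma sing_bijective : Function.Bijective (sing (S := S)) := by
  constructor
  · intro a a' h
    have := congrArg (fun v => extv S 1 v 1) h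
    simpa [extv_sing] using this
  · intro v
    refine ⟨v ⟨1, by simp⟩, ?_⟩
    funext i
    rcases i with ⟨i, hi⟩
    have h3 : i = 1 := by simp only [Finset.mem_Icc] at hi; omega
    subst h3
    exact cast_eq _ _

lemma sum_sing (f : V S 1 → ℝ) : ∑ v : V S 1, f v = ∑ a : S 1, f (sing a) :=
  (Fintype.sum_bijective _ sing_bijective _ _ fun a => rfl).symm

lemma pw_glue (A : (i : ℕ) → S i → S (i + 1) → ℝ) (π : S 1 → ℝ) {n : ℕ} (hn : 1 ≤ n)
    (w : V S n) (b : S (n + 1)) :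
    pw A π (n + 1) (glue w b) = pw A π n w * A n (extv S n w n) b := by
  unfold pw
  rw [Finset.prod_Ico_succ_top hn]
  have h1 : extv S (n + 1) (glue w b) 1 = extv S n w 1 :=
    extv_glue_le w b (by simp only [Finset.mem_Icc]; omega)
  have h2 : ∀ i ∈ Finset.Ico 1 n,
      A i (extv S (n + 1) (glue w b) i) (extv S (n + 1) (glue w b) (i + 1))
        = A i (extv S n w i) (extv S n w (i + 1)) := by
    intro i hi
    simp only [Finset.mem_Ico] at hi
    rw [extv_glue_le w b (by simp only [Finset.mem_Icc]; omega),
      extv_glue_le w b (by simp only [Finset.mem_Icc]; omega)]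
  have h3 : extv S (n + 1) (glue w b) n = extv S n w n :=
    extv_glue_le w b (by simp only [Finset.mem_Icc]; omega)
  rw [h1, h3, extv_glue_top, Finset.prod_congr rfl h2]
  ring

end Paths
section Paths2
variable {S : ℕ → Type} [∀ i, Fintype (S i)] [∀ i, Nonempty (S i)]

lemma single_exact (A : (i : ℕ) → S i → S (i + 1) → ℝ) (hA : ∀ i, IsStochastic (A i))
    (π : S 1 → ℝ) :
    ∀ k, 1 ≤ k → ∀ G : S k → ℝ,
      ∑ v : V S k, pw A π k v * G (extv S k v k) = ∑ a : S k, mTo A π k a * G a := by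
  intro k
  induction k with
  | zero => omega
  | succ k ih =>
    intro _ G
    match k, ih with
    | 0, _ =>
      rw [sum_sing (fun v => pw A π 1 v * G (extv S 1 v 1))]
      refine Finset.sum_congr rfl fun a _ => ?_
      rw [extv_sing a]
      show π (extv S 1 (sing a) 1) * (∏ i ∈ Finset.Ico 1 1, _) * G a = π a * G a
      rw [extv_sing a, Finset.Ico_self, Finset.prod_empty, mul_one]
    | (k + 1), ih =>
      rw [sum_glue (k + 1) (fun v => pw A π (k + 2) v * G (extv S (k + 2) v (k + 2)))]
      have step : ∀ w : V S (k + 1),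
          ∑ b : S (k + 2), pw A π (k + 2) (glue w b) * G (extv S (k + 2) (glue w b) (k + 2))
            = pw A π (k + 1) w * ∑ b : S (k + 2), A (k + 1) (extv S (k + 1) w (k + 1)) b * G b := by
        intro w
        rw [Finset.mul_sum]
        refine Finset.sum_congr rfl fun b _ => ?_
        rw [pw_glue A π (by omega) w b, extv_glue_top w b]
        ring
      rw [Finset.sum_congr rfl fun w _ => step w,
        ih (by omega) (fun a => ∑ b : S (k + 2), A (k + 1) a b * G b)]
      show ∑ a : S (k + 1), mTo A π (k + 1) a * ∑ b : S (k + 2), A (k + 1) a b * G b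
          = ∑ b : S (k + 2), (∑ a : S (k + 1), mTo A π (k + 1) a * A (k + 1) a b) * G b
      rw [show (∑ a : S (k + 1), mTo A π (k + 1) a * ∑ b : S (k + 2), A (k + 1) a b * G b)
          = ∑ a : S (k + 1), ∑ b : S (k + 2), mTo A π (k + 1) a * (A (k + 1) a b * G b) from
        Finset.sum_congr rfl fun a _ => Finset.mul_sum .., Finset.sum_comm]
      refine Finset.sum_congr rfl fun b _ => ?_
      rw [Finset.sum_mul]
      exact Finset.sum_congr rfl fun a _ => by ring

lemma pair_exact (A : (i : ℕ) → S i → S (i + 1) → ℝ) (hA : ∀ i, IsStochastic (A i))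
    (π : S 1 → ℝ) (j : ℕ) (hj : 1 ≤ j) :
    ∀ d (G : S j → ℝ) (H : S (j + d) → ℝ),
      ∑ v : V S (j + d), pw A π (j + d) v * (G (extv S (j + d) v j) * H (extv S (j + d) v (j + d)))
        = ∑ a : S j, mTo A π j a * (G a * ∑ b : S (j + d), matProd A j d a b * H b) := by
  intro d
  induction d with
  | zero =>
    intro G H
    have h1 : ∀ a : S j, (∑ b : S (j + 0), matProd A j 0 a b * H b) = H a := by
      intro a
      show (∑ b : S j, (if a = b then (1:ℝ) else 0) * H b) = H a
      simp [ite_mul, one_mul, zero_mul, Finset.sum_ite_eq]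
    calc ∑ v : V S (j + 0), pw A π (j + 0) v *
          (G (extv S (j + 0) v j) * H (extv S (j + 0) v (j + 0)))
        = ∑ a : S j, mTo A π j a * (G a * H a) :=
          single_exact A hA π j hj (fun a => G a * H a)
      _ = ∑ a : S j, mTo A π j a * (G a * ∑ b : S (j + 0), matProd A j 0 a b * H b) :=
          Finset.sum_congr rfl fun a _ => by rw [h1 a]
  | succ d ih =>
    intro G H
    show (∑ v : V S (j + d + 1), pw A π (j + d + 1) v *
        (G (extv S (j + d + 1) v j) * H (extv S (j + d + 1) v (j + d + 1))))
      = ∑ a : S j, mTo A π j a * (G a * ∑ b : S (j + d + 1), matProd A j (d + 1) a b * H b)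
    rw [sum_glue (j + d) (fun v => pw A π (j + d + 1) v *
      (G (extv S (j + d + 1) v j) * H (extv S (j + d + 1) v (j + d + 1))))]
    have step : ∀ w : V S (j + d),
        ∑ b : S (j + d + 1), pw A π (j + d + 1) (glue w b) *
            (G (extv S (j + d + 1) (glue w b) j) * H (extv S (j + d + 1) (glue w b) (j + d + 1)))
          = pw A π (j + d) w * (G (extv S (j + d) w j) *
              ∑ b : S (j + d + 1), A (j + d) (extv S (j + d) w (j + d)) b * H b) := by
      intro w
      rw [Finset.mul_sum, Finset.mul_sum]
      refine Finset.sum_congr rfl fun b _ => ?_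
      rw [pw_glue A π (by omega) w b, extv_glue_top w b,
        extv_glue_le w b (by simp only [Finset.mem_Icc]; omega)]
      ring
    rw [Finset.sum_congr rfl fun w _ => step w,
      ih G (fun a => ∑ b : S (j + d + 1), A (j + d) a b * H b)]
    refine Finset.sum_congr rfl fun a _ => ?_
    have h2 : (∑ a' : S (j + d), matProd A j d a a' * ∑ b : S (j + d + 1), A (j + d) a' b * H b)
        = ∑ b : S (j + d + 1), matProd A j (d + 1) a b * H b := by
      show _ = ∑ b : S (j + d + 1), (∑ a' : S (j + d), matProd A j d a a' * A (j + d) a' b) * H b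
      rw [show (∑ a' : S (j + d), matProd A j d a a' * ∑ b : S (j + d + 1), A (j + d) a' b * H b)
          = ∑ a' : S (j + d), ∑ b : S (j + d + 1), matProd A j d a a' * (A (j + d) a' b * H b) from
        Finset.sum_congr rfl fun a' _ => Finset.mul_sum .., Finset.sum_comm]
      refine Finset.sum_congr rfl fun b _ => ?_
      rw [Finset.sum_mul]
      exact Finset.sum_congr rfl fun a' _ => by ring
    rw [h2]

end Paths2
section Paths3
variable {S : ℕ → Type} [∀ i, Fintype (S i)] [∀ i, Nonempty (S i)]

lemma peel (A : (i : ℕ) → S i → S (i + 1) → ℝ) (hA : ∀ i, IsStochastic (A i))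
    (π : S 1 → ℝ) (N : ℕ) (hN : 1 ≤ N) (F : (∀ i, S i) → ℝ)
    (hdep : ∀ t t' : ∀ i, S i, (∀ i, 1 ≤ i → i ≤ N → t i = t' i) → F t = F t') :
    ∑ v : V S (N + 1), pw A π (N + 1) v * F (extv S (N + 1) v)
      = ∑ v : V S N, pw A π N v * F (extv S N v) := by
  rw [sum_glue N (fun v => pw A π (N + 1) v * F (extv S (N + 1) v))]
  refine Finset.sum_congr rfl fun w _ => ?_
  have hF : ∀ b : S (N + 1), F (extv S (N + 1) (glue w b)) = F (extv S N w) := by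
    intro b
    refine hdep _ _ fun i h1 h2 => ?_
    exact extv_glue_le w b (by simp only [Finset.mem_Icc]; omega)
  calc ∑ b : S (N + 1), pw A π (N + 1) (glue w b) * F (extv S (N + 1) (glue w b))
      = ∑ b : S (N + 1), pw A π N w * F (extv S N w) * A N (extv S N w N) b := by
        refine Finset.sum_congr rfl fun b _ => ?_
        rw [pw_glue A π hN w b, hF b]; ring
    _ = pw A π N w * F (extv S N w) := by
        rw [← Finset.mul_sum, (hA N).2 (extv S N w N), mul_one]

lemma up (A : (i : ℕ) → S i → S (i + 1) → ℝ) (hA : ∀ i, IsStochastic (A i))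
    (π : S 1 → ℝ) (N : ℕ) (hN : 1 ≤ N) (F : (∀ i, S i) → ℝ)
    (hdep : ∀ t t' : ∀ i, S i, (∀ i, 1 ≤ i → i ≤ N → t i = t' i) → F t = F t') :
    ∀ m, ∑ v : V S (N + m), pw A π (N + m) v * F (extv S (N + m) v)
      = ∑ v : V S N, pw A π N v * F (extv S N v) := by
  intro m
  induction m with
  | zero => rfl
  | succ m ih =>
    have hdep' : ∀ t t' : ∀ i, S i, (∀ i, 1 ≤ i → i ≤ N + m → t i = t' i) → F t = F t' :=
      fun t t' h => hdep t t' fun i h1 h2 => h i h1 (by omega)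
    exact (peel A hA π (N + m) (by omega) F hdep').trans ih

lemma single_sum (A : (i : ℕ) → S i → S (i + 1) → ℝ) (hA : ∀ i, IsStochastic (A i))
    (π : S 1 → ℝ) (n k : ℕ) (hk : 1 ≤ k) (hkn : k ≤ n) (G : S k → ℝ) :
    ∑ v : V S n, pw A π n v * G (extv S n v k) = ∑ a : S k, mTo A π k a * G a := by
  obtain ⟨m, rfl⟩ := Nat.exists_eq_add_of_le hkn
  have h := up A hA π k hk (fun t => G (t k))
    (fun t t' h => congrArg G (h k hk le_rfl)) m
  exact h.trans (single_exact A hA π k hk G)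

lemma pair_sum (A : (i : ℕ) → S i → S (i + 1) → ℝ) (hA : ∀ i, IsStochastic (A i))
    (π : S 1 → ℝ) (n j d : ℕ) (hj : 1 ≤ j) (hkn : j + d ≤ n) (G : S j → ℝ)
    (H : S (j + d) → ℝ) :
    ∑ v : V S n, pw A π n v * (G (extv S n v j) * H (extv S n v (j + d)))
      = ∑ a : S j, mTo A π j a * (G a * ∑ b : S (j + d), matProd A j d a b * H b) := by
  obtain ⟨m, rfl⟩ := Nat.exists_eq_add_of_le hkn
  have h := up A hA π (j + d) (by omega) (fun t => G (t j) * H (t (j + d)))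
    (fun t t' h => by
      show G (t j) * H (t (j + d)) = G (t' j) * H (t' (j + d))
      rw [h j hj (by omega), h (j + d) (by omega) le_rfl]) m
  exact h.trans (pair_exact A hA π j hj d G H)

end Paths3
lemma geom_tail_le (δ : ℝ) (hδ0 : 0 ≤ δ) (hδ1 : δ < 1) (N : ℕ) :
    ∑ q ∈ Finset.range N, δ ^ q ≤ 1 / (1 - δ) := by
  have h1δ : 0 < 1 - δ := by linarith
  rw [le_div_iff₀ h1δ]
  have h2 : (∑ q ∈ Finset.range N, δ ^ q) * (1 - δ) = 1 - δ ^ N := by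
    linear_combination -geom_sum_mul δ N
  rw [h2]
  have := pow_nonneg hδ0 N
  linarith

lemma geom_div (δ : ℝ) (hδ0 : 0 ≤ δ) (hδ1 : δ < 1) (r : ℕ) (hr : 1 ≤ r) (N : ℕ) :
    ∑ d ∈ Finset.range N, δ ^ (d / r) ≤ (r : ℝ) / (1 - δ) := by
  have hEQ : ∀ N', ∑ d ∈ Finset.range (r * N'), δ ^ (d / r)
      = ∑ q ∈ Finset.range N', (r : ℝ) * δ ^ q := by
    intro N'
    induction N' with
    | zero => simp
    | succ N' ih =>
      have hsplit : ∑ d ∈ Finset.range (r * (N' + 1)), δ ^ (d / r)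
          = (∑ d ∈ Finset.range (r * N'), δ ^ (d / r))
            + ∑ d ∈ Finset.Ico (r * N') (r * N' + r), δ ^ (d / r) := by
        have hb : r * (N' + 1) = r * N' + r := by ring
        rw [hb, Finset.range_eq_Ico,
          ← Finset.sum_Ico_consecutive _ (Nat.zero_le (r * N')) (by omega : r * N' ≤ r * N' + r),
          ← Finset.range_eq_Ico]
      have hconst : ∑ d ∈ Finset.Ico (r * N') (r * N' + r), δ ^ (d / r)
          = (r : ℝ) * δ ^ N' := by
        rw [Finset.sum_congr rfl (fun d hd => by
          have hd' := Finset.mem_Ico.mp hd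
          have : d / r = N' := by
            apply Nat.div_eq_of_lt_le
            · calc N' * r = r * N' := Nat.mul_comm _ _
                _ ≤ d := hd'.1
            · calc d < r * N' + r := hd'.2
                _ = (N' + 1) * r := by ring
          rw [this])]
        rw [Finset.sum_const, Nat.card_Ico]
        rw [show r * N' + r - r * N' = r from by omega, nsmul_eq_mul]
      rw [hsplit, hconst, ih, Finset.sum_range_succ]
  calc ∑ d ∈ Finset.range N, δ ^ (d / r)
      ≤ ∑ d ∈ Finset.range (r * N), δ ^ (d / r) := by
        apply Finset.sum_le_sum_of_subset_of_nonneg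
        · exact Finset.range_subset_range.mpr (by nlinarith)
        · intro d _ _; exact pow_nonneg hδ0 _
    _ = ∑ q ∈ Finset.range N, (r : ℝ) * δ ^ q := hEQ N
    _ = (r : ℝ) * ∑ q ∈ Finset.range N, δ ^ q := by rw [Finset.mul_sum]
    _ ≤ (r : ℝ) * (1 / (1 - δ)) := by
        apply mul_le_mul_of_nonneg_left (geom_tail_le δ hδ0 hδ1 N) (by positivity)
    _ = (r : ℝ) / (1 - δ) := by ring
section Analysis
variable {S : ℕ → Type} [∀ i, Fintype (S i)] [∀ i, Nonempty (S i)]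
variable (A : (i : ℕ) → S i → S (i + 1) → ℝ)
variable (δ : ℝ) (s n : ℕ)

/-- total-variation decay of the difference of marginals -/
lemma mdiff (hA : ∀ i, IsStochastic (A i)) (hδ0 : 0 ≤ δ)
    (hcontr : ∀ k, 1 ≤ k → k + s + 1 ≤ n → contractionCoeff (matProd A k (s + 1)) < δ)
    (π π' : S 1 → ℝ) (hπ0 : ∀ t, 0 ≤ π t) (hπ1 : ∑ t : S 1, π t = 1)
    (hπ'0 : ∀ t, 0 ≤ π' t) (hπ'1 : ∑ t : S 1, π' t = 1)
    (d : ℕ) (hd : 1 + d ≤ n) :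
    ∑ b : S (1 + d), |mTo A π (1 + d) b - mTo A π' (1 + d) b|
      ≤ 2 * δ ^ (d / (s + 1)) := by
  have hone : mTo A π 1 = π := rfl
  have hone' : mTo A π' 1 = π' := rfl
  have hb : ∀ b : S (1 + d), mTo A π (1 + d) b - mTo A π' (1 + d) b
      = pushf A 1 (fun a => π a - π' a) d b := by
    intro b
    rw [mTo_comp A π 1 le_rfl d b, mTo_comp A π' 1 le_rfl d b, hone, hone',
      pushf_eq_matProd A 1 (fun a => π a - π' a) d b, ← Finset.sum_sub_distrib]
    exact Finset.sum_congr rfl fun a _ => by ring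
  have h2 : ∑ b : S (1 + d), |mTo A π (1 + d) b - mTo A π' (1 + d) b|
      = ∑ b : S (1 + d), |pushf A 1 (fun a => π a - π' a) d b| :=
    Finset.sum_congr rfl fun b _ => by rw [hb b]
  rw [h2]
  have hq : (s + 1) * (d / (s + 1)) ≤ d := by
    calc (s + 1) * (d / (s + 1)) = d / (s + 1) * (s + 1) := Nat.mul_comm _ _
      _ ≤ d := Nat.div_mul_le_self _ _
  have h0ν : ∑ t : S 1, (π t - π' t) = 0 := by
    rw [Finset.sum_sub_distrib, hπ1, hπ'1]; ring
  have habsν : ∑ t : S 1, |π t - π' t| ≤ 2 := by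
    calc ∑ t : S 1, |π t - π' t| ≤ ∑ t : S 1, (π t + π' t) := by
          refine Finset.sum_le_sum fun t _ => ?_
          calc |π t - π' t| ≤ |π t| + |π' t| := abs_sub _ _
            _ = π t + π' t := by rw [abs_of_nonneg (hπ0 t), abs_of_nonneg (hπ'0 t)]
      _ = 2 := by rw [Finset.sum_add_distrib, hπ1, hπ'1]; norm_num
  exact decay A hA δ hδ0 s n hcontr (d / (s + 1)) 1 d (fun a => π a - π' a) 2 le_rfl hd hq
    h0ν habsν

/-- decay of row differences of products -/
lemma rowdiff (hA : ∀ i, IsStochastic (A i)) (hδ0 : 0 ≤ δ)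
    (hcontr : ∀ k, 1 ≤ k → k + s + 1 ≤ n → contractionCoeff (matProd A k (s + 1)) < δ)
    (j d : ℕ) (hj : 1 ≤ j) (hd : j + d ≤ n) (a a' : S j) :
    ∑ b : S (j + d), |matProd A j d a b - matProd A j d a' b| ≤ 2 * δ ^ (d / (s + 1)) := by
  set ν : S j → ℝ := fun t => (if a = t then 1 else 0) - (if a' = t then 1 else 0) with hν
  have hb : ∀ b : S (j + d), matProd A j d a b - matProd A j d a' b = pushf A j ν d b := by
    intro b
    rw [pushf_eq_matProd A j ν d b]
    rw [show (∑ t : S j, ν t * matProd A j d t b)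
        = ∑ t : S j, ((if a = t then matProd A j d t b else 0)
            - (if a' = t then matProd A j d t b else 0)) from
      Finset.sum_congr rfl fun t _ => by
        rw [hν]
        by_cases h1 : a = t <;> by_cases h2 : a' = t <;> simp [h1, h2]]
    rw [Finset.sum_sub_distrib, Finset.sum_ite_eq, Finset.sum_ite_eq]
    simp
  have h2 : ∑ b : S (j + d), |matProd A j d a b - matProd A j d a' b|
      = ∑ b : S (j + d), |pushf A j ν d b| :=
    Finset.sum_congr rfl fun b _ => by rw [hb b]
  rw [h2]
  have hq : (s + 1) * (d / (s + 1)) ≤ d := by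
    calc (s + 1) * (d / (s + 1)) = d / (s + 1) * (s + 1) := Nat.mul_comm _ _
      _ ≤ d := Nat.div_mul_le_self _ _
  have h0ν : ∑ t : S j, ν t = 0 := by
    rw [hν]
    rw [Finset.sum_sub_distrib, Finset.sum_ite_eq, Finset.sum_ite_eq]
    simp
  have habsν : ∑ t : S j, |ν t| ≤ 2 := by
    calc ∑ t : S j, |ν t|
        ≤ ∑ t : S j, ((if a = t then (1:ℝ) else 0) + (if a' = t then 1 else 0)) := by
          refine Finset.sum_le_sum fun t _ => ?_
          rw [hν]
          calc |(if a = t then (1:ℝ) else 0) - (if a' = t then 1 else 0)|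
              ≤ |(if a = t then (1:ℝ) else 0)| + |(if a' = t then (1:ℝ) else 0)| := abs_sub _ _
            _ = (if a = t then (1:ℝ) else 0) + (if a' = t then 1 else 0) := by
                congr 1 <;> (split <;> simp)
      _ = 2 := by rw [Finset.sum_add_distrib, Finset.sum_ite_eq, Finset.sum_ite_eq]; simp; norm_num
  exact decay A hA δ hδ0 s n hcontr (d / (s + 1)) j d ν 2 hj hd hq h0ν habsν

end Analysis
section Analysis2
variable {S : ℕ → Type} [∀ i, Fintype (S i)] [∀ i, Nonempty (S i)]
variable (A : (i : ℕ) → S i → S (i + 1) → ℝ)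
variable (δ : ℝ) (s n : ℕ) (ξ : (i : ℕ) → S i → ℝ) (M : ℝ)

lemma mdiffk (hA : ∀ i, IsStochastic (A i)) (hδ0 : 0 ≤ δ)
    (hcontr : ∀ k, 1 ≤ k → k + s + 1 ≤ n → contractionCoeff (matProd A k (s + 1)) < δ)
    (π π' : S 1 → ℝ) (hπ0 : ∀ t, 0 ≤ π t) (hπ1 : ∑ t : S 1, π t = 1)
    (hπ'0 : ∀ t, 0 ≤ π' t) (hπ'1 : ∑ t : S 1, π' t = 1)
    (k : ℕ) (hk : 1 ≤ k) (hkn : k ≤ n) :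
    ∑ b : S k, |mTo A π k b - mTo A π' k b| ≤ 2 * δ ^ ((k - 1) / (s + 1)) := by
  obtain ⟨d, rfl⟩ := Nat.exists_eq_add_of_le hk
  rw [show 1 + d - 1 = d from by omega]
  exact mdiff A δ s n hA hδ0 hcontr π π' hπ0 hπ1 hπ'0 hπ'1 d hkn

lemma E1_bound (hA : ∀ i, IsStochastic (A i)) (π : S 1 → ℝ)
    (hπ0 : ∀ t, 0 ≤ π t) (hπ1 : ∑ t : S 1, π t = 1)
    (hξ : ∀ i, 1 ≤ i → i ≤ n → ∀ t, |ξ i t| ≤ M)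
    (k : ℕ) (hk : 1 ≤ k) (hkn : k ≤ n) :
    |∑ a : S k, mTo A π k a * ξ k a| ≤ M := by
  obtain ⟨hpos, hsum⟩ := mTo_prob A hA π hπ0 hπ1 k hk
  calc |∑ a : S k, mTo A π k a * ξ k a| ≤ ∑ a : S k, |mTo A π k a * ξ k a| :=
        Finset.abs_sum_le_sum_abs _ _
    _ ≤ ∑ a : S k, mTo A π k a * M := by
        refine Finset.sum_le_sum fun a _ => ?_
        rw [abs_mul, abs_of_nonneg (hpos a)]
        exact mul_le_mul_of_nonneg_left (hξ k hk hkn a) (hpos a)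
    _ = M := by rw [← Finset.sum_mul, hsum, one_mul]

lemma E1_diff (hA : ∀ i, IsStochastic (A i)) (hδ0 : 0 ≤ δ)
    (hcontr : ∀ k, 1 ≤ k → k + s + 1 ≤ n → contractionCoeff (matProd A k (s + 1)) < δ)
    (π π' : S 1 → ℝ) (hπ0 : ∀ t, 0 ≤ π t) (hπ1 : ∑ t : S 1, π t = 1)
    (hπ'0 : ∀ t, 0 ≤ π' t) (hπ'1 : ∑ t : S 1, π' t = 1)
    (hM : 0 ≤ M) (hξ : ∀ i, 1 ≤ i → i ≤ n → ∀ t, |ξ i t| ≤ M)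
    (k : ℕ) (hk : 1 ≤ k) (hkn : k ≤ n) :
    |(∑ a : S k, mTo A π k a * ξ k a)
      - ∑ a : S k, mTo A π' k a * ξ k a| ≤ 2 * M * δ ^ ((k - 1) / (s + 1)) := by
  rw [← Finset.sum_sub_distrib]
  calc |∑ a : S k, (mTo A π k a * ξ k a - mTo A π' k a * ξ k a)|
      ≤ ∑ a : S k, |mTo A π k a - mTo A π' k a| * M := by
        refine (Finset.abs_sum_le_sum_abs _ _).trans (Finset.sum_le_sum fun a _ => ?_)
        rw [show mTo A π k a * ξ k a - mTo A π' k a * ξ k a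
            = (mTo A π k a - mTo A π' k a) * ξ k a from by ring, abs_mul]
        exact mul_le_mul_of_nonneg_left (hξ k hk hkn a) (abs_nonneg _)
    _ = (∑ a : S k, |mTo A π k a - mTo A π' k a|) * M := by
        rw [Finset.sum_mul]
    _ ≤ (2 * δ ^ ((k - 1) / (s + 1))) * M :=
        mul_le_mul_of_nonneg_right
          (mdiffk A δ s n hA hδ0 hcontr π π' hπ0 hπ1 hπ'0 hπ'1 k hk hkn) hM
    _ = 2 * M * δ ^ ((k - 1) / (s + 1)) := by ring

lemma E2_diff (hA : ∀ i, IsStochastic (A i)) (hδ0 : 0 ≤ δ)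
    (hcontr : ∀ k, 1 ≤ k → k + s + 1 ≤ n → contractionCoeff (matProd A k (s + 1)) < δ)
    (π π' : S 1 → ℝ) (hπ0 : ∀ t, 0 ≤ π t) (hπ1 : ∑ t : S 1, π t = 1)
    (hπ'0 : ∀ t, 0 ≤ π' t) (hπ'1 : ∑ t : S 1, π' t = 1)
    (hM : 0 ≤ M) (hξ : ∀ i, 1 ≤ i → i ≤ n → ∀ t, |ξ i t| ≤ M)
    (j d₂ : ℕ) (hj : 1 ≤ j) (hd : j + d₂ ≤ n) :
    |(∑ a : S j, mTo A π j a *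
        (ξ j a * ∑ b : S (j + d₂), matProd A j d₂ a b * ξ (j + d₂) b))
      - ∑ a : S j, mTo A π' j a *
        (ξ j a * ∑ b : S (j + d₂), matProd A j d₂ a b * ξ (j + d₂) b)|
      ≤ 2 * M ^ 2 * δ ^ ((j - 1) / (s + 1)) := by
  set w : S j → ℝ := fun a =>
    ξ j a * ∑ b : S (j + d₂), matProd A j d₂ a b * ξ (j + d₂) b with hw
  have hQ := matProd_stochastic A hA j d₂
  have hwb : ∀ a, |w a| ≤ M ^ 2 := by
    intro a
    have hinner : |∑ b : S (j + d₂), matProd A j d₂ a b * ξ (j + d₂) b| ≤ M := by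
      calc |∑ b : S (j + d₂), matProd A j d₂ a b * ξ (j + d₂) b|
          ≤ ∑ b : S (j + d₂), |matProd A j d₂ a b * ξ (j + d₂) b| :=
            Finset.abs_sum_le_sum_abs _ _
        _ ≤ ∑ b : S (j + d₂), matProd A j d₂ a b * M := by
            refine Finset.sum_le_sum fun b _ => ?_
            rw [abs_mul, abs_of_nonneg (hQ.1 a b)]
            exact mul_le_mul_of_nonneg_left (hξ _ (by omega) hd b) (hQ.1 a b)
        _ = M := by rw [← Finset.sum_mul, hQ.2 a, one_mul]
    rw [hw]
    calc |ξ j a * ∑ b : S (j + d₂), matProd A j d₂ a b * ξ (j + d₂) b|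
        = |ξ j a| * |∑ b : S (j + d₂), matProd A j d₂ a b * ξ (j + d₂) b| :=
          abs_mul _ _
      _ ≤ M * M := mul_le_mul (hξ _ hj (by omega) a) hinner (abs_nonneg _) hM
      _ = M ^ 2 := (sq M).symm
  rw [← Finset.sum_sub_distrib]
  calc |∑ a : S j, (mTo A π j a * w a - mTo A π' j a * w a)|
      ≤ ∑ a : S j, |mTo A π j a - mTo A π' j a| * M ^ 2 := by
        refine (Finset.abs_sum_le_sum_abs _ _).trans (Finset.sum_le_sum fun a _ => ?_)
        rw [show mTo A π j a * w a - mTo A π' j a * w a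
            = (mTo A π j a - mTo A π' j a) * w a from by ring, abs_mul]
        exact mul_le_mul_of_nonneg_left (hwb a) (abs_nonneg _)
    _ = (∑ a : S j, |mTo A π j a - mTo A π' j a|) * M ^ 2 := by
        rw [Finset.sum_mul]
    _ ≤ (2 * δ ^ ((j - 1) / (s + 1))) * M ^ 2 :=
        mul_le_mul_of_nonneg_right
          (mdiffk A δ s n hA hδ0 hcontr π π' hπ0 hπ1 hπ'0 hπ'1 j hj (by omega)) (sq_nonneg M)
    _ = 2 * M ^ 2 * δ ^ ((j - 1) / (s + 1)) := by ring

end Analysis2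
section Analysis3
variable {S : ℕ → Type} [∀ i, Fintype (S i)] [∀ i, Nonempty (S i)]
variable (A : (i : ℕ) → S i → S (i + 1) → ℝ)
variable (δ : ℝ) (s n : ℕ) (ξ : (i : ℕ) → S i → ℝ) (M : ℝ)

lemma Cov_bound (hA : ∀ i, IsStochastic (A i)) (hδ0 : 0 ≤ δ)
    (hcontr : ∀ k, 1 ≤ k → k + s + 1 ≤ n → contractionCoeff (matProd A k (s + 1)) < δ)
    (π : S 1 → ℝ) (hπ0 : ∀ t, 0 ≤ π t) (hπ1 : ∑ t : S 1, π t = 1)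
    (hM : 0 ≤ M) (hξ : ∀ i, 1 ≤ i → i ≤ n → ∀ t, |ξ i t| ≤ M)
    (j d₂ : ℕ) (hj : 1 ≤ j) (hd : j + d₂ ≤ n) :
    |(∑ a : S j, mTo A π j a *
        (ξ j a * ∑ b : S (j + d₂), matProd A j d₂ a b * ξ (j + d₂) b))
      - (∑ a : S j, mTo A π j a * ξ j a)
        * ∑ b : S (j + d₂), mTo A π (j + d₂) b * ξ (j + d₂) b|
      ≤ 2 * M ^ 2 * δ ^ (d₂ / (s + 1)) := by
  obtain ⟨hα0, hα1⟩ := mTo_prob A hA π hπ0 hπ1 j hj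
  set g : S j → ℝ := fun a => ∑ b : S (j + d₂), matProd A j d₂ a b * ξ (j + d₂) b with hg
  set c : ℝ := ∑ b : S (j + d₂), mTo A π (j + d₂) b * ξ (j + d₂) b with hc
  -- pointwise bound on |g a - c|
  have hgc : ∀ a : S j, |g a - c| ≤ 2 * δ ^ (d₂ / (s + 1)) * M := by
    intro a
    have hc2 : c = ∑ a' : S j, mTo A π j a' * g a' := by
      have e1 : c = ∑ b : S (j + d₂),
          (∑ a' : S j, mTo A π j a' * matProd A j d₂ a' b) * ξ (j + d₂) b := by
        rw [hc]
        exact Finset.sum_congr rfl fun b _ => by rw [mTo_comp A π j hj d₂ b]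
      have e2 : (∑ b : S (j + d₂), (∑ a' : S j, mTo A π j a' * matProd A j d₂ a' b)
            * ξ (j + d₂) b)
          = ∑ b : S (j + d₂), ∑ a' : S j, mTo A π j a' *
            (matProd A j d₂ a' b * ξ (j + d₂) b) :=
        Finset.sum_congr rfl fun b _ => by
          rw [Finset.sum_mul]
          exact Finset.sum_congr rfl fun a' _ => by ring
      rw [e1, e2, Finset.sum_comm]
      exact Finset.sum_congr rfl fun a' _ => by rw [hg, Finset.mul_sum]
    have hga : g a = ∑ a' : S j, mTo A π j a' * g a := by
      rw [← Finset.sum_mul, hα1, one_mul]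
    have hdiff : g a - c = ∑ a' : S j, mTo A π j a' * (g a - g a') := by
      rw [hc2]
      nth_rewrite 1 [hga]
      rw [← Finset.sum_sub_distrib]
      exact Finset.sum_congr rfl fun a' _ => by ring
    have hrow : ∀ a' : S j, |g a - g a'| ≤ 2 * δ ^ (d₂ / (s + 1)) * M := by
      intro a'
      rw [hg]
      rw [← Finset.sum_sub_distrib]
      calc |∑ b : S (j + d₂), (matProd A j d₂ a b * ξ (j + d₂) b
              - matProd A j d₂ a' b * ξ (j + d₂) b)|
          ≤ ∑ b : S (j + d₂), |matProd A j d₂ a b - matProd A j d₂ a' b| * M := by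
            refine (Finset.abs_sum_le_sum_abs _ _).trans (Finset.sum_le_sum fun b _ => ?_)
            rw [show matProd A j d₂ a b * ξ (j + d₂) b - matProd A j d₂ a' b * ξ (j + d₂) b
                = (matProd A j d₂ a b - matProd A j d₂ a' b) * ξ (j + d₂) b from by ring,
              abs_mul]
            exact mul_le_mul_of_nonneg_left (hξ _ (by omega) hd b) (abs_nonneg _)
        _ = (∑ b : S (j + d₂), |matProd A j d₂ a b - matProd A j d₂ a' b|) * M := by
            rw [Finset.sum_mul]
        _ ≤ (2 * δ ^ (d₂ / (s + 1))) * M :=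
            mul_le_mul_of_nonneg_right
              (rowdiff A δ s n hA hδ0 hcontr j d₂ hj hd a a') hM
        _ = 2 * δ ^ (d₂ / (s + 1)) * M := by ring
    calc |g a - c| = |∑ a' : S j, mTo A π j a' * (g a - g a')| := by rw [hdiff]
      _ ≤ ∑ a' : S j, mTo A π j a' * (2 * δ ^ (d₂ / (s + 1)) * M) := by
          refine (Finset.abs_sum_le_sum_abs _ _).trans (Finset.sum_le_sum fun a' _ => ?_)
          rw [abs_mul, abs_of_nonneg (hα0 a')]
          exact mul_le_mul_of_nonneg_left (hrow a') (hα0 a')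
      _ = 2 * δ ^ (d₂ / (s + 1)) * M := by rw [← Finset.sum_mul, hα1, one_mul]
  -- rewrite the covariance
  have hcov : (∑ a : S j, mTo A π j a * (ξ j a * g a))
      - (∑ a : S j, mTo A π j a * ξ j a) * c
      = ∑ a : S j, mTo A π j a * (ξ j a * (g a - c)) := by
    rw [Finset.sum_mul, ← Finset.sum_sub_distrib]
    exact Finset.sum_congr rfl fun a _ => by ring
  rw [hcov]
  calc |∑ a : S j, mTo A π j a * (ξ j a * (g a - c))|
      ≤ ∑ a : S j, mTo A π j a * (M * (2 * δ ^ (d₂ / (s + 1)) * M)) := by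
        refine (Finset.abs_sum_le_sum_abs _ _).trans (Finset.sum_le_sum fun a _ => ?_)
        rw [abs_mul, abs_of_nonneg (hα0 a)]
        refine mul_le_mul_of_nonneg_left ?_ (hα0 a)
        rw [abs_mul]
        refine mul_le_mul (hξ j hj (by omega) a) (hgc a) (abs_nonneg _) hM
    _ = M * (2 * δ ^ (d₂ / (s + 1)) * M) := by rw [← Finset.sum_mul, hα1, one_mul]
    _ = 2 * M ^ 2 * δ ^ (d₂ / (s + 1)) := by ring

end Analysis3
lemma natdiv_add_le (s a b c : ℕ) (h : a + b ≤ 4 * c) :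
    a / (4 * (s + 1)) + b / (4 * (s + 1)) ≤ c / (s + 1) := by
  have h4 : 0 < 4 * (s + 1) := by omega
  have h1 : a / (4 * (s + 1)) + b / (4 * (s + 1)) ≤ (a + b) / (4 * (s + 1)) := by
    rw [Nat.le_div_iff_mul_le h4]
    calc (a / (4 * (s + 1)) + b / (4 * (s + 1))) * (4 * (s + 1))
        = a / (4 * (s + 1)) * (4 * (s + 1)) + b / (4 * (s + 1)) * (4 * (s + 1)) := by ring
      _ ≤ a + b := Nat.add_le_add (Nat.div_mul_le_self _ _) (Nat.div_mul_le_self _ _)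
  have h2 : (a + b) / (4 * (s + 1)) ≤ (4 * c) / (4 * (s + 1)) := Nat.div_le_div_right h
  have h3 : (4 * c) / (4 * (s + 1)) = c / (s + 1) := Nat.mul_div_mul_left _ _ (by omega)
  omega

section Term
variable {S : ℕ → Type} [∀ i, Fintype (S i)] [∀ i, Nonempty (S i)]
variable (A : (i : ℕ) → S i → S (i + 1) → ℝ)
variable (δ : ℝ) (s n : ℕ) (ξ : (i : ℕ) → S i → ℝ) (M : ℝ)

lemma termle (hA : ∀ i, IsStochastic (A i)) (hδ0 : 0 ≤ δ) (hδ1 : δ < 1)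
    (hcontr : ∀ k, 1 ≤ k → k + s + 1 ≤ n → contractionCoeff (matProd A k (s + 1)) < δ)
    (π π' : S 1 → ℝ) (hπ0 : ∀ t, 0 ≤ π t) (hπ1 : ∑ t : S 1, π t = 1)
    (hπ'0 : ∀ t, 0 ≤ π' t) (hπ'1 : ∑ t : S 1, π' t = 1)
    (hM : 0 ≤ M) (hξ : ∀ i, 1 ≤ i → i ≤ n → ∀ t, |ξ i t| ≤ M)
    (j d₂ : ℕ) (hj : 1 ≤ j) (hd : j + d₂ ≤ n) :
    |((∑ a : S j, mTo A π j a *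
          (ξ j a * ∑ b : S (j + d₂), matProd A j d₂ a b * ξ (j + d₂) b))
        - (∑ a : S j, mTo A π j a * ξ j a)
          * ∑ b : S (j + d₂), mTo A π (j + d₂) b * ξ (j + d₂) b)
      - ((∑ a : S j, mTo A π' j a *
          (ξ j a * ∑ b : S (j + d₂), matProd A j d₂ a b * ξ (j + d₂) b))
        - (∑ a : S j, mTo A π' j a * ξ j a)
          * ∑ b : S (j + d₂), mTo A π' (j + d₂) b * ξ (j + d₂) b)|
      ≤ 6 * M ^ 2 * (δ ^ ((j - 1) / (4 * (s + 1))) * δ ^ ((j + d₂ - 1) / (4 * (s + 1)))) := by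
  have hδ1le : δ ≤ 1 := hδ1.le
  set X : ℝ := ∑ a : S j, mTo A π j a *
    (ξ j a * ∑ b : S (j + d₂), matProd A j d₂ a b * ξ (j + d₂) b) with hX
  set X' : ℝ := ∑ a : S j, mTo A π' j a *
    (ξ j a * ∑ b : S (j + d₂), matProd A j d₂ a b * ξ (j + d₂) b) with hX'
  set u : ℝ := ∑ a : S j, mTo A π j a * ξ j a with hu
  set u' : ℝ := ∑ a : S j, mTo A π' j a * ξ j a with hu'
  set w : ℝ := ∑ b : S (j + d₂), mTo A π (j + d₂) b * ξ (j + d₂) b with hw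
  set w' : ℝ := ∑ b : S (j + d₂), mTo A π' (j + d₂) b * ξ (j + d₂) b with hw'
  have hpow : ∀ e : ℕ, (0:ℝ) ≤ δ ^ e := fun e => pow_nonneg hδ0 e
  have hMM : (0:ℝ) ≤ M ^ 2 := sq_nonneg M
  rcases le_total d₂ (j - 1) with hcase | hcase
  · -- use difference-of-initial-distribution estimates
    have hE : (j - 1) / (4 * (s + 1)) + (j + d₂ - 1) / (4 * (s + 1)) ≤ (j - 1) / (s + 1) :=
      natdiv_add_le s _ _ _ (by omega)
    have h1 : |X - X'| ≤ 2 * M ^ 2 * δ ^ ((j - 1) / (s + 1)) :=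
      E2_diff A δ s n ξ M hA hδ0 hcontr π π' hπ0 hπ1 hπ'0 hπ'1 hM hξ j d₂ hj hd
    have h2 : |u - u'| ≤ 2 * M * δ ^ ((j - 1) / (s + 1)) :=
      E1_diff A δ s n ξ M hA hδ0 hcontr π π' hπ0 hπ1 hπ'0 hπ'1 hM hξ j hj (by omega)
    have h3 : |w - w'| ≤ 2 * M * δ ^ ((j - 1) / (s + 1)) := by
      have h3a := E1_diff A δ s n ξ M hA hδ0 hcontr π π' hπ0 hπ1 hπ'0 hπ'1 hM hξ
        (j + d₂) (by omega) hd
      have h3b : δ ^ ((j + d₂ - 1) / (s + 1)) ≤ δ ^ ((j - 1) / (s + 1)) :=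
        pow_le_pow_of_le_one hδ0 hδ1le (Nat.div_le_div_right (by omega))
      calc |w - w'| ≤ 2 * M * δ ^ ((j + d₂ - 1) / (s + 1)) := h3a
        _ ≤ 2 * M * δ ^ ((j - 1) / (s + 1)) := by nlinarith
    have h4 : |u| ≤ M := E1_bound A n ξ M hA π hπ0 hπ1 hξ j hj (by omega)
    have h5 : |w'| ≤ M := E1_bound A n ξ M hA π' hπ'0 hπ'1 hξ (j + d₂) (by omega) hd
    have h6 : |u * w - u' * w'| ≤ 4 * M ^ 2 * δ ^ ((j - 1) / (s + 1)) := by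
      have e1 : u * w - u' * w' = u * (w - w') + (u - u') * w' := by ring
      calc |u * w - u' * w'| = |u * (w - w') + (u - u') * w'| := by rw [e1]
        _ ≤ |u * (w - w')| + |(u - u') * w'| := abs_add_le _ _
        _ = |u| * |w - w'| + |u - u'| * |w'| := by rw [abs_mul, abs_mul]
        _ ≤ M * (2 * M * δ ^ ((j - 1) / (s + 1)))
            + (2 * M * δ ^ ((j - 1) / (s + 1))) * M := by
            refine add_le_add (mul_le_mul h4 h3 (abs_nonneg _) hM) ?_
            exact mul_le_mul h2 h5 (abs_nonneg _) (by positivity)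
        _ = 4 * M ^ 2 * δ ^ ((j - 1) / (s + 1)) := by ring
    have h7 : |(X - u * w) - (X' - u' * w')| ≤ 6 * M ^ 2 * δ ^ ((j - 1) / (s + 1)) := by
      calc |(X - u * w) - (X' - u' * w')| = |(X - X') - (u * w - u' * w')| := by ring_nf
        _ ≤ |X - X'| + |u * w - u' * w'| := abs_sub _ _
        _ ≤ 2 * M ^ 2 * δ ^ ((j - 1) / (s + 1)) + 4 * M ^ 2 * δ ^ ((j - 1) / (s + 1)) := by
            linarith
        _ = 6 * M ^ 2 * δ ^ ((j - 1) / (s + 1)) := by ring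
    refine h7.trans ?_
    have h8 : δ ^ ((j - 1) / (s + 1))
        ≤ δ ^ ((j - 1) / (4 * (s + 1))) * δ ^ ((j + d₂ - 1) / (4 * (s + 1))) := by
      rw [← pow_add]
      exact pow_le_pow_of_le_one hδ0 hδ1le hE
    nlinarith
  · -- use covariance decay
    have hE : (j - 1) / (4 * (s + 1)) + (j + d₂ - 1) / (4 * (s + 1)) ≤ d₂ / (s + 1) :=
      natdiv_add_le s _ _ _ (by omega)
    have h1 : |X - u * w| ≤ 2 * M ^ 2 * δ ^ (d₂ / (s + 1)) :=
      Cov_bound A δ s n ξ M hA hδ0 hcontr π hπ0 hπ1 hM hξ j d₂ hj hd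
    have h2 : |X' - u' * w'| ≤ 2 * M ^ 2 * δ ^ (d₂ / (s + 1)) :=
      Cov_bound A δ s n ξ M hA hδ0 hcontr π' hπ'0 hπ'1 hM hξ j d₂ hj hd
    have h7 : |(X - u * w) - (X' - u' * w')| ≤ 4 * M ^ 2 * δ ^ (d₂ / (s + 1)) :=
      (abs_sub _ _).trans (by linarith)
    refine h7.trans ?_
    have h8 : δ ^ (d₂ / (s + 1))
        ≤ δ ^ ((j - 1) / (4 * (s + 1))) * δ ^ ((j + d₂ - 1) / (4 * (s + 1))) := by
      rw [← pow_add]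
      exact pow_le_pow_of_le_one hδ0 hδ1le hE
    nlinarith [mul_nonneg hMM (mul_nonneg (hpow ((j - 1) / (4 * (s + 1))))
        (hpow ((j + d₂ - 1) / (4 * (s + 1))))),
      mul_le_mul_of_nonneg_left h8 (by positivity : (0:ℝ) ≤ M ^ 2)]
end Term
section Key
variable {S : ℕ → Type} [∀ i, Fintype (S i)] [∀ i, Nonempty (S i)]

/-- expectation of `ξ k` under the chain with initial distribution `ρ` -/
noncomputable def E1x (A : (i : ℕ) → S i → S (i + 1) → ℝ) (ξ : (i : ℕ) → S i → ℝ)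
    (ρ : S 1 → ℝ) (k : ℕ) : ℝ := ∑ a : S k, mTo A ρ k a * ξ k a

/-- expectation of `ξ j · ξ k` under the chain -/
noncomputable def E2x (A : (i : ℕ) → S i → S (i + 1) → ℝ) (ξ : (i : ℕ) → S i → ℝ)
    (n : ℕ) (ρ : S 1 → ℝ) (j k : ℕ) : ℝ :=
  ∑ v : V S n, pw A ρ n v * (ξ j (extv S n v j) * ξ k (extv S n v k))

lemma exp_eq (A : (i : ℕ) → S i → S (i + 1) → ℝ) (hA : ∀ i, IsStochastic (A i))
    (ξ : (i : ℕ) → S i → ℝ) (n : ℕ) (ρ : S 1 → ℝ) :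
    ∑ v : V S n, pw A ρ n v * ∑ k ∈ Finset.Icc 1 n, ξ k (extv S n v k)
      = ∑ k ∈ Finset.Icc 1 n, E1x A ξ ρ k := by
  calc ∑ v : V S n, pw A ρ n v * ∑ k ∈ Finset.Icc 1 n, ξ k (extv S n v k)
      = ∑ v : V S n, ∑ k ∈ Finset.Icc 1 n, pw A ρ n v * ξ k (extv S n v k) :=
        Finset.sum_congr rfl fun v _ => Finset.mul_sum ..
    _ = ∑ k ∈ Finset.Icc 1 n, ∑ v : V S n, pw A ρ n v * ξ k (extv S n v k) :=
        Finset.sum_comm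
    _ = ∑ k ∈ Finset.Icc 1 n, E1x A ξ ρ k := by
        refine Finset.sum_congr rfl fun k hk => ?_
        have hk' := Finset.mem_Icc.mp hk
        exact single_sum A hA ρ n k hk'.1 hk'.2 (ξ k)

lemma sum_pw_one (A : (i : ℕ) → S i → S (i + 1) → ℝ) (hA : ∀ i, IsStochastic (A i))
    (n : ℕ) (hn : 1 ≤ n) (ρ : S 1 → ℝ) (h1 : ∑ t : S 1, ρ t = 1) :
    ∑ v : V S n, pw A ρ n v = 1 := by
  have h := single_sum A hA ρ n 1 le_rfl hn (fun _ => (1 : ℝ))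
  simp only [mul_one] at h
  exact h.trans h1

lemma var_expand (A : (i : ℕ) → S i → S (i + 1) → ℝ) (hA : ∀ i, IsStochastic (A i))
    (ξ : (i : ℕ) → S i → ℝ) (n : ℕ) (hn : 1 ≤ n)
    (ρ : S 1 → ℝ) (h1 : ∑ t : S 1, ρ t = 1) :
    ∑ v : V S n, pw A ρ n v * ((∑ k ∈ Finset.Icc 1 n, ξ k (extv S n v k))
        - ∑ v' : V S n, pw A ρ n v' * ∑ k ∈ Finset.Icc 1 n, ξ k (extv S n v' k)) ^ 2
      = (∑ j ∈ Finset.Icc 1 n, ∑ k ∈ Finset.Icc 1 n, E2x A ξ n ρ j k)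
        - (∑ v : V S n, pw A ρ n v * ∑ k ∈ Finset.Icc 1 n, ξ k (extv S n v k)) ^ 2 := by
  set F : V S n → ℝ := fun v => ∑ k ∈ Finset.Icc 1 n, ξ k (extv S n v k) with hF
  set e : ℝ := ∑ v : V S n, pw A ρ n v * F v with he
  have hsq : ∑ v : V S n, pw A ρ n v * (F v) ^ 2
      = ∑ j ∈ Finset.Icc 1 n, ∑ k ∈ Finset.Icc 1 n, E2x A ξ n ρ j k := by
    have hptw : ∀ v : V S n, pw A ρ n v * (F v) ^ 2
        = ∑ j ∈ Finset.Icc 1 n, ∑ k ∈ Finset.Icc 1 n,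
            pw A ρ n v * (ξ j (extv S n v j) * ξ k (extv S n v k)) := by
      intro v
      calc pw A ρ n v * (F v) ^ 2
          = pw A ρ n v * ∑ j ∈ Finset.Icc 1 n, ∑ k ∈ Finset.Icc 1 n,
              ξ j (extv S n v j) * ξ k (extv S n v k) := by
            rw [hF, sq, Finset.sum_mul_sum]
        _ = ∑ j ∈ Finset.Icc 1 n, pw A ρ n v * ∑ k ∈ Finset.Icc 1 n,
              ξ j (extv S n v j) * ξ k (extv S n v k) := Finset.mul_sum ..
        _ = ∑ j ∈ Finset.Icc 1 n, ∑ k ∈ Finset.Icc 1 n,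
              pw A ρ n v * (ξ j (extv S n v j) * ξ k (extv S n v k)) :=
            Finset.sum_congr rfl fun j _ => Finset.mul_sum ..
    calc ∑ v : V S n, pw A ρ n v * (F v) ^ 2
        = ∑ v : V S n, ∑ j ∈ Finset.Icc 1 n, ∑ k ∈ Finset.Icc 1 n,
            pw A ρ n v * (ξ j (extv S n v j) * ξ k (extv S n v k)) :=
          Finset.sum_congr rfl fun v _ => hptw v
      _ = ∑ j ∈ Finset.Icc 1 n, ∑ v : V S n, ∑ k ∈ Finset.Icc 1 n,
            pw A ρ n v * (ξ j (extv S n v j) * ξ k (extv S n v k)) := Finset.sum_comm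
      _ = ∑ j ∈ Finset.Icc 1 n, ∑ k ∈ Finset.Icc 1 n, E2x A ξ n ρ j k :=
          Finset.sum_congr rfl fun j _ => Finset.sum_comm
  have hexp : ∑ v : V S n, pw A ρ n v * (F v - e) ^ 2
      = (∑ v : V S n, pw A ρ n v * (F v) ^ 2) - 2 * e * (∑ v : V S n, pw A ρ n v * F v)
        + e ^ 2 * ∑ v : V S n, pw A ρ n v := by
    calc ∑ v : V S n, pw A ρ n v * (F v - e) ^ 2
        = ∑ v : V S n, (pw A ρ n v * (F v) ^ 2 - 2 * e * (pw A ρ n v * F v)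
            + e ^ 2 * pw A ρ n v) := Finset.sum_congr rfl fun v _ => by ring
      _ = _ := by
          rw [Finset.sum_add_distrib, Finset.sum_sub_distrib, ← Finset.mul_sum,
            ← Finset.mul_sum]
  rw [hexp, hsq, ← he, sum_pw_one A hA n hn ρ h1]
  ring
end Key
theorem key {S : ℕ → Type} [∀ i, Fintype (S i)] [∀ i, Nonempty (S i)]
    (A : (i : ℕ) → S i → S (i + 1) → ℝ) (hA : ∀ i, IsStochastic (A i))
    (δ : ℝ) (hδ0 : 0 ≤ δ) (hδ1 : δ < 1) (s n : ℕ) (hn : 1 ≤ n)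
    (hcontr : ∀ k, 1 ≤ k → k + s + 1 ≤ n → contractionCoeff (matProd A k (s + 1)) < δ)
    (ξ : (i : ℕ) → S i → ℝ) (M : ℝ) (hM : 0 ≤ M)
    (hξ : ∀ i, 1 ≤ i → i ≤ n → ∀ t, |ξ i t| ≤ M)
    (π π' : S 1 → ℝ) (hπ0 : ∀ t, 0 ≤ π t) (hπ1 : ∑ t : S 1, π t = 1)
    (hπ'0 : ∀ t, 0 ≤ π' t) (hπ'1 : ∑ t : S 1, π' t = 1) :
    |(∑ v : V S n, pw A π n v * ∑ k ∈ Finset.Icc 1 n, ξ k (extv S n v k))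
        - ∑ v : V S n, pw A π' n v * ∑ k ∈ Finset.Icc 1 n, ξ k (extv S n v k)|
      ≤ 2 * M * (((s : ℝ) + 1) / (1 - δ))
    ∧ |(∑ v : V S n, pw A π n v *
          ((∑ k ∈ Finset.Icc 1 n, ξ k (extv S n v k))
            - ∑ v' : V S n, pw A π n v' * ∑ k ∈ Finset.Icc 1 n, ξ k (extv S n v' k)) ^ 2)
        - ∑ v : V S n, pw A π' n v *
          ((∑ k ∈ Finset.Icc 1 n, ξ k (extv S n v k))
            - ∑ v' : V S n, pw A π' n v' * ∑ k ∈ Finset.Icc 1 n, ξ k (extv S n v' k)) ^ 2|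
      ≤ 6 * M ^ 2 * ((4 * ((s : ℝ) + 1)) / (1 - δ)) ^ 2 := by
  have h1δ : (0 : ℝ) < 1 - δ := by linarith
  -- geometric sum bounds
  have hgeom : ∀ r : ℕ, 1 ≤ r →
      ∑ k ∈ Finset.Icc 1 n, δ ^ ((k - 1) / r) ≤ (r : ℝ) / (1 - δ) := by
    intro r hr
    have e0 : ∑ k ∈ Finset.Icc 1 n, δ ^ ((k - 1) / r)
        = ∑ i ∈ Finset.range n, δ ^ (i / r) := by
      rw [← Finset.Ico_add_one_right_eq_Icc, Finset.sum_Ico_eq_sum_range]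
      refine Finset.sum_congr rfl fun i _ => ?_
      rw [show 1 + i - 1 = i from by omega]
    rw [e0]
    exact geom_div δ hδ0 hδ1 r hr n
  constructor
  · -- expectations
    rw [exp_eq A hA ξ n π, exp_eq A hA ξ n π', ← Finset.sum_sub_distrib]
    calc |∑ k ∈ Finset.Icc 1 n, (E1x A ξ π k - E1x A ξ π' k)|
        ≤ ∑ k ∈ Finset.Icc 1 n, |E1x A ξ π k - E1x A ξ π' k| :=
          Finset.abs_sum_le_sum_abs _ _
      _ ≤ ∑ k ∈ Finset.Icc 1 n, 2 * M * δ ^ ((k - 1) / (s + 1)) := by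
          refine Finset.sum_le_sum fun k hk => ?_
          have hk' := Finset.mem_Icc.mp hk
          exact E1_diff A δ s n ξ M hA hδ0 hcontr π π' hπ0 hπ1 hπ'0 hπ'1 hM hξ k hk'.1 hk'.2
      _ = 2 * M * ∑ k ∈ Finset.Icc 1 n, δ ^ ((k - 1) / (s + 1)) := by rw [Finset.mul_sum]
      _ ≤ 2 * M * (((s : ℕ) + 1 : ℝ) / (1 - δ)) := by
          refine mul_le_mul_of_nonneg_left ?_ (by positivity)
          have := hgeom (s + 1) (by omega)
          push_cast at this ⊢
          exact this
      _ = 2 * M * (((s : ℝ) + 1) / (1 - δ)) := by norm_num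
  · -- variances
    rw [var_expand A hA ξ n hn π hπ1, var_expand A hA ξ n hn π' hπ'1,
      exp_eq A hA ξ n π, exp_eq A hA ξ n π']
    have hsqe : ∀ ρ : S 1 → ℝ, (∑ k ∈ Finset.Icc 1 n, E1x A ξ ρ k) ^ 2
        = ∑ j ∈ Finset.Icc 1 n, ∑ k ∈ Finset.Icc 1 n, E1x A ξ ρ j * E1x A ξ ρ k := by
      intro ρ; rw [sq, Finset.sum_mul_sum]
    rw [hsqe π, hsqe π']
    have hcollect : ((∑ j ∈ Finset.Icc 1 n, ∑ k ∈ Finset.Icc 1 n, E2x A ξ n π j k)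
          - ∑ j ∈ Finset.Icc 1 n, ∑ k ∈ Finset.Icc 1 n, E1x A ξ π j * E1x A ξ π k)
        - ((∑ j ∈ Finset.Icc 1 n, ∑ k ∈ Finset.Icc 1 n, E2x A ξ n π' j k)
          - ∑ j ∈ Finset.Icc 1 n, ∑ k ∈ Finset.Icc 1 n, E1x A ξ π' j * E1x A ξ π' k)
        = ∑ j ∈ Finset.Icc 1 n, ∑ k ∈ Finset.Icc 1 n,
            ((E2x A ξ n π j k - E1x A ξ π j * E1x A ξ π k)
              - (E2x A ξ n π' j k - E1x A ξ π' j * E1x A ξ π' k)) := by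
      rw [← Finset.sum_sub_distrib, ← Finset.sum_sub_distrib, ← Finset.sum_sub_distrib]
      refine Finset.sum_congr rfl fun j _ => ?_
      rw [← Finset.sum_sub_distrib, ← Finset.sum_sub_distrib, ← Finset.sum_sub_distrib]
    rw [hcollect]
    have hpair : ∀ j ∈ Finset.Icc 1 n, ∀ k ∈ Finset.Icc 1 n,
        |(E2x A ξ n π j k - E1x A ξ π j * E1x A ξ π k)
          - (E2x A ξ n π' j k - E1x A ξ π' j * E1x A ξ π' k)|
        ≤ 6 * M ^ 2 * (δ ^ ((j - 1) / (4 * (s + 1))) * δ ^ ((k - 1) / (4 * (s + 1)))) := by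
      have hmain : ∀ j k : ℕ, 1 ≤ j → j ≤ k → k ≤ n →
          |(E2x A ξ n π j k - E1x A ξ π j * E1x A ξ π k)
            - (E2x A ξ n π' j k - E1x A ξ π' j * E1x A ξ π' k)|
          ≤ 6 * M ^ 2 * (δ ^ ((j - 1) / (4 * (s + 1))) * δ ^ ((k - 1) / (4 * (s + 1)))) := by
        intro j k hj hjk hkn
        obtain ⟨d₂, rfl⟩ := Nat.exists_eq_add_of_le hjk
        have hE2m : ∀ ρ : S 1 → ℝ, E2x A ξ n ρ j (j + d₂)
            = ∑ a : S j, mTo A ρ j a *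
                (ξ j a * ∑ b : S (j + d₂), matProd A j d₂ a b * ξ (j + d₂) b) :=
          fun ρ => pair_sum A hA ρ n j d₂ hj hkn (ξ j) (ξ (j + d₂))
        rw [show E2x A ξ n π j (j + d₂) - E1x A ξ π j * E1x A ξ π (j + d₂)
              - (E2x A ξ n π' j (j + d₂) - E1x A ξ π' j * E1x A ξ π' (j + d₂))
            = ((∑ a : S j, mTo A π j a *
                  (ξ j a * ∑ b : S (j + d₂), matProd A j d₂ a b * ξ (j + d₂) b))
                - (∑ a : S j, mTo A π j a * ξ j a)
                  * ∑ b : S (j + d₂), mTo A π (j + d₂) b * ξ (j + d₂) b)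
              - ((∑ a : S j, mTo A π' j a *
                  (ξ j a * ∑ b : S (j + d₂), matProd A j d₂ a b * ξ (j + d₂) b))
                - (∑ a : S j, mTo A π' j a * ξ j a)
                  * ∑ b : S (j + d₂), mTo A π' (j + d₂) b * ξ (j + d₂) b) from by
          rw [hE2m π, hE2m π']; rfl]
        exact termle A δ s n ξ M hA hδ0 hδ1 hcontr π π' hπ0 hπ1 hπ'0 hπ'1 hM hξ j d₂ hj hkn
      intro j hj k hk
      have hj' := Finset.mem_Icc.mp hj
      have hk' := Finset.mem_Icc.mp hk
      rcases le_total j k with h | h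
      · exact hmain j k hj'.1 h hk'.2
      · have hsymE2 : ∀ ρ : S 1 → ℝ, E2x A ξ n ρ j k = E2x A ξ n ρ k j :=
          fun ρ => Finset.sum_congr rfl fun v _ => by ring
        have hres := hmain k j hk'.1 h hj'.2
        rw [hsymE2 π, hsymE2 π', mul_comm (E1x A ξ π j) (E1x A ξ π k),
          mul_comm (E1x A ξ π' j) (E1x A ξ π' k),
          mul_comm (δ ^ ((j - 1) / (4 * (s + 1)))) (δ ^ ((k - 1) / (4 * (s + 1))))]
        exact hres
    calc |∑ j ∈ Finset.Icc 1 n, ∑ k ∈ Finset.Icc 1 n,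
            ((E2x A ξ n π j k - E1x A ξ π j * E1x A ξ π k)
              - (E2x A ξ n π' j k - E1x A ξ π' j * E1x A ξ π' k))|
        ≤ ∑ j ∈ Finset.Icc 1 n, ∑ k ∈ Finset.Icc 1 n,
            |(E2x A ξ n π j k - E1x A ξ π j * E1x A ξ π k)
              - (E2x A ξ n π' j k - E1x A ξ π' j * E1x A ξ π' k)| :=
          (Finset.abs_sum_le_sum_abs _ _).trans
            (Finset.sum_le_sum fun j _ => Finset.abs_sum_le_sum_abs _ _)
      _ ≤ ∑ j ∈ Finset.Icc 1 n, ∑ k ∈ Finset.Icc 1 n,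
            6 * M ^ 2 * (δ ^ ((j - 1) / (4 * (s + 1))) * δ ^ ((k - 1) / (4 * (s + 1)))) :=
          Finset.sum_le_sum fun j hj => Finset.sum_le_sum fun k hk => hpair j hj k hk
      _ = 6 * M ^ 2 * ((∑ j ∈ Finset.Icc 1 n, δ ^ ((j - 1) / (4 * (s + 1))))
            * ∑ k ∈ Finset.Icc 1 n, δ ^ ((k - 1) / (4 * (s + 1)))) := by
          rw [Finset.sum_mul_sum, Finset.mul_sum]
          exact Finset.sum_congr rfl fun j _ => (Finset.mul_sum ..).symm
      _ ≤ 6 * M ^ 2 * ((4 * ((s : ℝ) + 1) / (1 - δ)) * (4 * ((s : ℝ) + 1) / (1 - δ))) := by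
          have hB := hgeom (4 * (s + 1)) (by omega)
          have hBc : ∑ k ∈ Finset.Icc 1 n, δ ^ ((k - 1) / (4 * (s + 1)))
              ≤ 4 * ((s : ℝ) + 1) / (1 - δ) := by
            refine hB.trans (le_of_eq ?_)
            push_cast
            ring
          have hBnn : (0:ℝ) ≤ ∑ k ∈ Finset.Icc 1 n, δ ^ ((k - 1) / (4 * (s + 1))) :=
            Finset.sum_nonneg fun k _ => pow_nonneg hδ0 _
          refine mul_le_mul_of_nonneg_left ?_ (by positivity)
          exact mul_le_mul hBc hBc hBnn (by positivity)
      _ = 6 * M ^ 2 * ((4 * ((s : ℝ) + 1)) / (1 - δ)) ^ 2 := by ring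
section Bridge
variable {S : ℕ → Type} [∀ i, Fintype (S i)] [∀ i, Nonempty (S i)]

lemma bridge (n : ℕ) {Ω : Type} [MeasurableSpace Ω] (μ : Measure Ω)
    (hμ : IsProbabilityMeasure μ)
    (X : (i : ℕ) → Ω → S i) (hX : ∀ i, @Measurable Ω (S i) _ ⊤ (X i))
    (A : (i : ℕ) → S i → S (i + 1) → ℝ) (π : S 1 → ℝ)
    (hlaw : ∀ t : (i : ℕ) → S i,
      (μ {ω | ∀ i ∈ Finset.Icc 1 n, X i ω = t i}).toReal
        = π (t 1) * ∏ i ∈ Finset.Ico 1 n, A i (t i) (t (i + 1)))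
    (F : V S n → ℝ) :
    ∫ ω, F (fun i => X i ω) ∂μ = ∑ v : V S n, pw A π n v * F v := by
  haveI := hμ
  set Av : V S n → Set Ω := fun v => {ω | ∀ i ∈ Finset.Icc 1 n, X i ω = extv S n v i}
    with hAv
  have hmeas : ∀ v, MeasurableSet (Av v) := by
    intro v
    have hset : Av v = ⋂ i ∈ (Finset.Icc 1 n : Finset ℕ), {ω | X i ω = extv S n v i} := by
      ext ω
      simp only [hAv, Set.mem_setOf_eq, Set.mem_iInter]
    rw [hset]
    refine MeasurableSet.biInter (Set.to_countable _) fun i _ => ?_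
    exact hX i (MeasurableSpace.measurableSet_top :
      MeasurableSet[⊤] ({extv S n v i} : Set (S i)))
  have hdecomp : (fun ω => F (fun i => X i ω))
      = fun ω => ∑ v : V S n, (Av v).indicator (fun _ => F v) ω := by
    funext ω
    set v₀ : V S n := fun i => X i ω with hv0
    have hmem : ∀ v : V S n, ω ∈ Av v ↔ v = v₀ := by
      intro v
      constructor
      · intro hωv
        funext i
        have h1 := hωv i i.2
        rw [extv_mem v i.2] at h1
        exact h1.symm
      · rintro rfl
        intro i hi
        rw [extv_mem _ hi]
    rw [Finset.sum_eq_single v₀ (fun v _ hne =>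
        Set.indicator_of_notMem (fun hm => hne ((hmem v).mp hm)) _)
      (fun h => absurd (Finset.mem_univ v₀) h)]
    rw [Set.indicator_of_mem ((hmem v₀).mpr rfl)]
  have hint : ∫ ω, F (fun i => X i ω) ∂μ = ∑ v : V S n, (μ (Av v)).toReal * F v := by
    rw [hdecomp, MeasureTheory.integral_finset_sum _
      (fun v _ => (MeasureTheory.integrable_const (F v)).indicator (hmeas v))]
    refine Finset.sum_congr rfl fun v _ => ?_
    rw [MeasureTheory.integral_indicator_const (F v) (hmeas v), smul_eq_mul, measureReal_def]
  rw [hint]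
  refine Finset.sum_congr rfl fun v _ => ?_
  have hl := hlaw (extv S n v)
  have : (μ (Av v)).toReal = pw A π n v := hl
  rw [this]
end Bridge


/-- The expectations and variances of bounded functionals of a contracting array of
finite-state Markov chains differ by a uniformly bounded amount when the initial
distribution is changed: the constant `C` depends only on the transition matrices,
the functions `ξ`, and the contraction data. -/
theorem stmt12 (S : ℕ → Type) [∀ i, Fintype (S i)] [∀ i, Nonempty (S i)]
    (P : (n : ℕ) → (i : ℕ) → S i → S (i + 1) → ℝ)
    (hP : ∀ n i, IsStochastic (P n i))
    (δ : ℝ) (hδ0 : 0 ≤ δ) (hδ1 : δ < 1) (s : ℕ)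
    (hcontr : ∀ n k : ℕ, 1 ≤ k → k + s + 1 ≤ n →
      contractionCoeff (matProd (P n) k (s + 1)) < δ)
    (ξ : (n : ℕ) → (i : ℕ) → S i → ℝ)
    (M : ℝ) (hξ : ∀ n : ℕ, ∀ i : ℕ, 1 ≤ i → i ≤ n → ∀ t : S i, |ξ n i t| ≤ M) :
    ∃ C : ℝ, ∀ (n : ℕ) (Ω Ω' : Type) [MeasurableSpace Ω] [MeasurableSpace Ω']
      (μ : Measure Ω) (μ' : Measure Ω'),
      IsProbabilityMeasure μ → IsProbabilityMeasure μ' →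
      ∀ (X : (i : ℕ) → Ω → S i) (X' : (i : ℕ) → Ω' → S i) (π π' : S 1 → ℝ),
        ((∀ t, 0 ≤ π t) ∧ ∑ t : S 1, π t = 1) →
        ((∀ t, 0 ≤ π' t) ∧ ∑ t : S 1, π' t = 1) →
        (∀ i, @Measurable Ω (S i) _ ⊤ (X i)) →
        (∀ i, @Measurable Ω' (S i) _ ⊤ (X' i)) →
        (∀ t : (i : ℕ) → S i,
          (μ {ω | ∀ i ∈ Finset.Icc 1 n, X i ω = t i}).toReal =
            π (t 1) * ∏ i ∈ Finset.Ico 1 n, P n i (t i) (t (i + 1))) →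
        (∀ t : (i : ℕ) → S i,
          (μ' {ω | ∀ i ∈ Finset.Icc 1 n, X' i ω = t i}).toReal =
            π' (t 1) * ∏ i ∈ Finset.Ico 1 n, P n i (t i) (t (i + 1))) →
        |(∫ ω, (∑ k ∈ Finset.Icc 1 n, ξ n k (X k ω)) ∂μ) -
            (∫ ω, (∑ k ∈ Finset.Icc 1 n, ξ n k (X' k ω)) ∂μ')| ≤ C ∧
        |(∫ ω, ((∑ k ∈ Finset.Icc 1 n, ξ n k (X k ω)) -
              ∫ ω', (∑ k ∈ Finset.Icc 1 n, ξ n k (X k ω')) ∂μ) ^ 2 ∂μ) -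
            (∫ ω, ((∑ k ∈ Finset.Icc 1 n, ξ n k (X' k ω)) -
              ∫ ω', (∑ k ∈ Finset.Icc 1 n, ξ n k (X' k ω')) ∂μ') ^ 2 ∂μ')| ≤ C := by
  have hM : 0 ≤ M :=
    (abs_nonneg _).trans (hξ 1 1 le_rfl le_rfl (Classical.arbitrary (S 1)))
  have h1δ : (0 : ℝ) < 1 - δ := by linarith
  set C₁ : ℝ := 2 * M * (((s : ℝ) + 1) / (1 - δ)) with hC₁
  set C₂ : ℝ := 6 * M ^ 2 * ((4 * ((s : ℝ) + 1)) / (1 - δ)) ^ 2 with hC₂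
  have hC₁0 : 0 ≤ C₁ := by
    rw [hC₁]
    have : (0:ℝ) ≤ ((s : ℝ) + 1) / (1 - δ) := div_nonneg (by positivity) h1δ.le
    positivity
  have hC₂0 : 0 ≤ C₂ := by
    rw [hC₂]
    positivity
  refine ⟨C₁ + C₂, ?_⟩
  intro n Ω Ω' mΩ mΩ' μ μ' hμ hμ' X X' π π' hπ hπ' hX hX' hlaw hlaw'
  haveI := hμ
  haveI := hμ'
  by_cases hn : 1 ≤ n
  · -- main case
    set A := P n with hAdef
    set F₁ : V S n → ℝ := fun v => ∑ k ∈ Finset.Icc 1 n, ξ n k (extv S n v k) with hF₁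
    have hfun : ∀ (Ω₀ : Type) (Y : (i : ℕ) → Ω₀ → S i),
        (fun ω => ∑ k ∈ Finset.Icc 1 n, ξ n k (Y k ω))
          = fun ω => F₁ (fun i => Y i ω) := by
      intro Ω₀ Y
      funext ω
      refine Finset.sum_congr rfl fun k hk => ?_
      rw [extv_mem _ hk]
    have hint1 : ∫ ω, (∑ k ∈ Finset.Icc 1 n, ξ n k (X k ω)) ∂μ
        = ∑ v : V S n, pw A π n v * F₁ v := by
      rw [hfun Ω X]
      exact bridge n μ hμ X hX A π hlaw F₁
    have hint1' : ∫ ω, (∑ k ∈ Finset.Icc 1 n, ξ n k (X' k ω)) ∂μ'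
        = ∑ v : V S n, pw A π' n v * F₁ v := by
      rw [hfun Ω' X']
      exact bridge n μ' hμ' X' hX' A π' hlaw' F₁
    have hkey := key A (fun i => hP n i) δ hδ0 hδ1 s n hn (hcontr n) (ξ n) M hM
      (hξ n) π π' hπ.1 hπ.2 hπ'.1 hπ'.2
    constructor
    · rw [hint1, hint1']
      calc |(∑ v : V S n, pw A π n v * F₁ v) - ∑ v : V S n, pw A π' n v * F₁ v|
          ≤ C₁ := hkey.1
        _ ≤ C₁ + C₂ := by linarith
    · have hint2 : ∫ ω, ((∑ k ∈ Finset.Icc 1 n, ξ n k (X k ω)) -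
            ∫ ω', (∑ k ∈ Finset.Icc 1 n, ξ n k (X k ω')) ∂μ) ^ 2 ∂μ
          = ∑ v : V S n, pw A π n v *
              (F₁ v - ∑ v' : V S n, pw A π n v' * F₁ v') ^ 2 := by
        have hfun2 : (fun ω => ((∑ k ∈ Finset.Icc 1 n, ξ n k (X k ω)) -
              ∫ ω', (∑ k ∈ Finset.Icc 1 n, ξ n k (X k ω')) ∂μ) ^ 2)
            = fun ω => (fun v : V S n =>
                (F₁ v - ∑ v' : V S n, pw A π n v' * F₁ v') ^ 2) (fun i => X i ω) := by
          funext ω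
          rw [hint1]
          have := congrFun (hfun Ω X) ω
          rw [this]
        rw [hfun2]
        exact bridge n μ hμ X hX A π hlaw
          (fun v => (F₁ v - ∑ v' : V S n, pw A π n v' * F₁ v') ^ 2)
      have hint2' : ∫ ω, ((∑ k ∈ Finset.Icc 1 n, ξ n k (X' k ω)) -
            ∫ ω', (∑ k ∈ Finset.Icc 1 n, ξ n k (X' k ω')) ∂μ') ^ 2 ∂μ'
          = ∑ v : V S n, pw A π' n v *
              (F₁ v - ∑ v' : V S n, pw A π' n v' * F₁ v') ^ 2 := by
        have hfun2 : (fun ω => ((∑ k ∈ Finset.Icc 1 n, ξ n k (X' k ω)) -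
              ∫ ω', (∑ k ∈ Finset.Icc 1 n, ξ n k (X' k ω')) ∂μ') ^ 2)
            = fun ω => (fun v : V S n =>
                (F₁ v - ∑ v' : V S n, pw A π' n v' * F₁ v') ^ 2) (fun i => X' i ω) := by
          funext ω
          rw [hint1']
          have := congrFun (hfun Ω' X') ω
          rw [this]
        rw [hfun2]
        exact bridge n μ' hμ' X' hX' A π' hlaw'
          (fun v => (F₁ v - ∑ v' : V S n, pw A π' n v' * F₁ v') ^ 2)
      rw [hint2, hint2']
      refine hkey.2.trans ?_
      linarith
  · -- degenerate case n = 0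
    have hempty : Finset.Icc 1 n = ∅ := by
      apply Finset.Icc_eq_empty
      omega
    simp only [hempty, Finset.sum_empty]
    rw [MeasureTheory.integral_zero, MeasureTheory.integral_zero]
    simp only [sub_zero, zero_sub, abs_zero]
    constructor
    · linarith
    · rw [MeasureTheory.integral_const, MeasureTheory.integral_const]
      simp only [MeasureTheory.measure_univ, ENNReal.toReal_one, one_smul, smul_eq_mul]
      simp
      linarith
end Generic
end

section
/- Let P be a stochastic matrix with rows indexed by a finite set T and columns by a finite set S, and Q a stochastic matrix with rows indexed by S and columns by a finite set U. Then τ(PQ) ≤ τ(P)·τ(Q). -/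
open scoped BigOperators

lemma contr_nonneg {T S : Type} [Fintype T] [Fintype S] (P : T → S → ℝ) :
    0 ≤ contractionCoeff P := by
  unfold contractionCoeff
  have : 0 ≤ ⨆ t₁ : T, ⨆ t₂ : T, ∑ s : S, |P t₁ s - P t₂ s| :=
    Real.iSup_nonneg fun t₁ => Real.iSup_nonneg fun t₂ =>
      Finset.sum_nonneg fun s _ => abs_nonneg _
  linarith

lemma pair_le_contr {T S : Type} [Fintype T] [Fintype S] (P : T → S → ℝ) (t₁ t₂ : T) :
    ∑ s : S, |P t₁ s - P t₂ s| ≤ 2 * contractionCoeff P := by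
  have h1 : ∑ s : S, |P t₁ s - P t₂ s| ≤ ⨆ t₂' : T, ∑ s : S, |P t₁ s - P t₂' s| :=
    le_ciSup (f := fun t₂' : T => ∑ s : S, |P t₁ s - P t₂' s|)
      (Set.Finite.bddAbove (Set.finite_range _)) t₂
  have h2 : (⨆ t₂' : T, ∑ s : S, |P t₁ s - P t₂' s|)
      ≤ ⨆ t₁' : T, ⨆ t₂' : T, ∑ s : S, |P t₁' s - P t₂' s| :=
    le_ciSup (f := fun t₁' : T => ⨆ t₂' : T, ∑ s : S, |P t₁' s - P t₂' s|)
      (Set.Finite.bddAbove (Set.finite_range _)) t₁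
  unfold contractionCoeff
  linarith

lemma key_lemma {S U : Type} [Fintype S] [Fintype U] (Q : S → U → ℝ) (d : S → ℝ)
    (hd : ∑ s : S, d s = 0) (C : ℝ)
    (hC : ∀ s s', ∑ u : U, |Q s u - Q s' u| ≤ C) :
    ∑ u : U, |∑ s : S, d s * Q s u| ≤ (1 / 2 * ∑ s : S, |d s|) * C := by
  set a : S → ℝ := fun s => max (d s) 0 with ha_def
  set b : S → ℝ := fun s => max (-d s) 0 with hb_def
  have ha : ∀ s, 0 ≤ a s := fun s => le_max_right _ _
  have hb : ∀ s, 0 ≤ b s := fun s => le_max_right _ _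
  have hab : ∀ s, d s = a s - b s := fun s =>
    (max_zero_sub_max_neg_zero_eq_self (d s)).symm
  have habs : ∀ s, |d s| = a s + b s := fun s =>
    (max_zero_add_max_neg_zero_eq_abs_self (d s)).symm
  set δ := ∑ s : S, a s with hδ_def
  have hsum : ∑ s : S, b s = δ := by
    have : ∑ s : S, (a s - b s) = 0 := by
      simp_rw [← hab]; exact hd
    rw [Finset.sum_sub_distrib] at this
    linarith
  have habs_sum : ∑ s : S, |d s| = 2 * δ := by
    rw [Finset.sum_congr rfl fun s _ => habs s, Finset.sum_add_distrib, hsum]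
    ring
  have hδ0 : 0 ≤ δ := Finset.sum_nonneg fun s _ => ha s
  rcases eq_or_lt_of_le hδ0 with hδ | hδ
  · -- δ = 0 : d = 0
    have ha0 : ∀ s ∈ Finset.univ, a s = 0 :=
      (Finset.sum_eq_zero_iff_of_nonneg fun s _ => ha s).1 hδ.symm
    have hb0 : ∀ s ∈ Finset.univ, b s = 0 :=
      (Finset.sum_eq_zero_iff_of_nonneg fun s _ => hb s).1 (by rw [hsum]; exact hδ.symm)
    have hd0 : ∀ s, d s = 0 := fun s => by
      rw [hab s, ha0 s (Finset.mem_univ s), hb0 s (Finset.mem_univ s)]; ring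
    simp [hd0]
  · -- δ > 0
    obtain ⟨s₀⟩ : Nonempty S := by
      by_contra h
      rw [not_nonempty_iff] at h
      rw [hδ_def, Finset.univ_eq_empty, Finset.sum_empty] at hδ
      exact lt_irrefl _ hδ
    have hC0 : 0 ≤ C := le_trans (by simp) (hC s₀ s₀)
    have hident : ∀ u, δ * (∑ s : S, d s * Q s u)
        = ∑ s : S, ∑ s' : S, a s * b s' * (Q s u - Q s' u) := by
      intro u
      have h1 : ∑ s : S, ∑ s' : S, a s * b s' * Q s u
          = (∑ s : S, a s * Q s u) * ∑ s' : S, b s' := by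
        rw [Finset.sum_mul]
        refine Finset.sum_congr rfl fun s _ => ?_
        rw [Finset.mul_sum]
        exact Finset.sum_congr rfl fun s' _ => by ring
      have h2 : ∑ s : S, ∑ s' : S, a s * b s' * Q s' u
          = (∑ s : S, a s) * ∑ s' : S, b s' * Q s' u := by
        rw [Finset.sum_mul]
        refine Finset.sum_congr rfl fun s _ => ?_
        rw [Finset.mul_sum]
        exact Finset.sum_congr rfl fun s' _ => by ring
      have h3 : ∑ s : S, ∑ s' : S, a s * b s' * (Q s u - Q s' u)
          = (∑ s : S, a s * Q s u) * δ - δ * ∑ s' : S, b s' * Q s' u := by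
        simp_rw [mul_sub, Finset.sum_sub_distrib]
        rw [h1, h2, hsum, hδ_def]
      rw [h3]
      have h4 : ∑ s : S, d s * Q s u
          = (∑ s : S, a s * Q s u) - ∑ s : S, b s * Q s u := by
        rw [← Finset.sum_sub_distrib]
        exact Finset.sum_congr rfl fun s _ => by rw [hab s]; ring
      rw [h4]; ring
    have hbound : ∀ u, δ * |∑ s : S, d s * Q s u|
        ≤ ∑ s : S, ∑ s' : S, a s * b s' * |Q s u - Q s' u| := by
      intro u
      calc δ * |∑ s : S, d s * Q s u| = |δ * ∑ s : S, d s * Q s u| := by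
            rw [abs_mul, abs_of_pos hδ]
        _ = |∑ s : S, ∑ s' : S, a s * b s' * (Q s u - Q s' u)| := by rw [hident u]
        _ ≤ ∑ s : S, |∑ s' : S, a s * b s' * (Q s u - Q s' u)| :=
            Finset.abs_sum_le_sum_abs _ _
        _ ≤ ∑ s : S, ∑ s' : S, |a s * b s' * (Q s u - Q s' u)| :=
            Finset.sum_le_sum fun s _ => Finset.abs_sum_le_sum_abs _ _
        _ = ∑ s : S, ∑ s' : S, a s * b s' * |Q s u - Q s' u| := by
            refine Finset.sum_congr rfl fun s _ => Finset.sum_congr rfl fun s' _ => ?_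
            rw [abs_mul, abs_mul, abs_of_nonneg (ha s), abs_of_nonneg (hb s')]
    have hfinal : δ * ∑ u : U, |∑ s : S, d s * Q s u| ≤ δ * (δ * C) := by
      calc δ * ∑ u : U, |∑ s : S, d s * Q s u|
          = ∑ u : U, δ * |∑ s : S, d s * Q s u| := by rw [Finset.mul_sum]
        _ ≤ ∑ u : U, ∑ s : S, ∑ s' : S, a s * b s' * |Q s u - Q s' u| :=
            Finset.sum_le_sum fun u _ => hbound u
        _ = ∑ s : S, ∑ s' : S, ∑ u : U, a s * b s' * |Q s u - Q s' u| := by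
            rw [Finset.sum_comm]
            exact Finset.sum_congr rfl fun s _ => Finset.sum_comm
        _ = ∑ s : S, ∑ s' : S, a s * b s' * ∑ u : U, |Q s u - Q s' u| := by
            refine Finset.sum_congr rfl fun s _ => Finset.sum_congr rfl fun s' _ => ?_
            rw [Finset.mul_sum]
        _ ≤ ∑ s : S, ∑ s' : S, a s * b s' * C := by
            refine Finset.sum_le_sum fun s _ => Finset.sum_le_sum fun s' _ => ?_
            exact mul_le_mul_of_nonneg_left (hC s s') (mul_nonneg (ha s) (hb s'))
        _ = (∑ s : S, a s) * (∑ s' : S, b s') * C := by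
            rw [Finset.sum_mul, Finset.sum_mul]
            refine Finset.sum_congr rfl fun s _ => ?_
            rw [Finset.mul_sum, Finset.sum_mul]
        _ = δ * (δ * C) := by rw [hsum, ← hδ_def]; ring
    have := (mul_le_mul_iff_right₀ hδ).1 hfinal
    rw [habs_sum]
    linarith

theorem stmt13 {T S U : Type} [Fintype T] [Fintype S] [Fintype U]
    (P : T → S → ℝ) (Q : S → U → ℝ)
    (hP : IsStochastic P) (hQ : IsStochastic Q) :
    contractionCoeff (fun t u => ∑ s : S, P t s * Q s u) ≤
      contractionCoeff P * contractionCoeff Q := by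
  have hτP := contr_nonneg P
  have hτQ := contr_nonneg Q
  have hpair : ∀ t₁ t₂ : T,
      ∑ u : U, |(∑ s : S, P t₁ s * Q s u) - ∑ s : S, P t₂ s * Q s u|
        ≤ 2 * (contractionCoeff P * contractionCoeff Q) := by
    intro t₁ t₂
    set d : S → ℝ := fun s => P t₁ s - P t₂ s with hd_def
    have hd : ∑ s : S, d s = 0 := by
      rw [hd_def]
      simp only [Finset.sum_sub_distrib, hP.2 t₁, hP.2 t₂, sub_self]
    have hrw : ∀ u, (∑ s : S, P t₁ s * Q s u) - ∑ s : S, P t₂ s * Q s u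
        = ∑ s : S, d s * Q s u := by
      intro u
      rw [← Finset.sum_sub_distrib]
      exact Finset.sum_congr rfl fun s _ => by rw [hd_def]; ring
    have hkey := key_lemma Q d hd (2 * contractionCoeff Q)
      (fun s s' => pair_le_contr Q s s')
    have hdP : ∑ s : S, |d s| ≤ 2 * contractionCoeff P := pair_le_contr P t₁ t₂
    calc ∑ u : U, |(∑ s : S, P t₁ s * Q s u) - ∑ s : S, P t₂ s * Q s u|
        = ∑ u : U, |∑ s : S, d s * Q s u| := by
          exact Finset.sum_congr rfl fun u _ => by rw [hrw u]
      _ ≤ (1 / 2 * ∑ s : S, |d s|) * (2 * contractionCoeff Q) := hkey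
      _ ≤ (1 / 2 * (2 * contractionCoeff P)) * (2 * contractionCoeff Q) := by
          apply mul_le_mul_of_nonneg_right _ (by linarith)
          linarith
      _ = 2 * (contractionCoeff P * contractionCoeff Q) := by ring
  have hsup : (⨆ t₁ : T, ⨆ t₂ : T, ∑ u : U,
      |(fun t u => ∑ s : S, P t s * Q s u) t₁ u - (fun t u => ∑ s : S, P t s * Q s u) t₂ u|)
      ≤ 2 * (contractionCoeff P * contractionCoeff Q) := by
    refine Real.iSup_le (fun t₁ => Real.iSup_le (fun t₂ => ?_) (by positivity)) (by positivity)
    simpa using hpair t₁ t₂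
  unfold contractionCoeff at hsup ⊢
  unfold contractionCoeff at hτP hτQ
  linarith
end
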